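/- arXiv:1602.08151 — 5 statements merged into one kernel-verified Lean document; each statement's English description precedes it below -/
import Mathlib

section
/- For any vector a ∈ ℝⁿ, matrix F ∈ ℝ^{p×n}, and vector b ∈ ℝᵖ, the maximum of (1/n)·zᵀa over z ∈ [-1,1]ⁿ satisfying (1/n)Fz ≥ b equals the minimum over σ ≥ 0 in ℝᵖ of (−bᵀσ + (1/n)‖Fᵀσ + a‖₁), provided the constraint set {z ∈ [-1,1]ⁿ : (1/n)Fz ≥ b} is nonempty. -/
lemma sumswap (p n : ℕ) (F : Matrix (Fin p) (Fin n) ℝ) (a : Fin n → ℝ)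
    (z : Fin n → ℝ) (c : Fin p → ℝ) :
    ∑ j, z j * ((∑ i, F i j * c i) + a j)
      = (∑ j, z j * a j) + ∑ i, c i * ∑ j, F i j * z j := by
  simp only [mul_add, Finset.sum_add_distrib]
  rw [add_comm]
  congr 1
  simp_rw [Finset.mul_sum]
  rw [Finset.sum_comm]
  exact Finset.sum_congr rfl fun i _ => Finset.sum_congr rfl fun j _ => by ring


lemma weakdual (p n : ℕ) (hn : 0 < n) (F : Matrix (Fin p) (Fin n) ℝ)
    (b : Fin p → ℝ) (a : Fin n → ℝ) (z : Fin n → ℝ) (σ : Fin p → ℝ)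
    (hz : ∀ j, |z j| ≤ 1) (hzf : ∀ i, b i ≤ (1 / (n : ℝ)) * ∑ j, F i j * z j)
    (hσ : ∀ i, 0 ≤ σ i) :
    (1 / (n : ℝ)) * ∑ j, z j * a j ≤
      -(∑ i, b i * σ i) + (1 / (n : ℝ)) * ∑ j, |(∑ i, F i j * σ i) + a j| := by
  have hn' : (0:ℝ) < (n:ℝ) := by exact_mod_cast hn
  have key : (1 / (n : ℝ)) * ∑ j, z j * a j ≤
      -(∑ i, b i * σ i) + (1 / (n : ℝ)) * ∑ j, z j * ((∑ i, F i j * σ i) + a j) := by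
    have hswap : ∑ j, z j * ((∑ i, F i j * σ i) + a j)
        = (∑ j, z j * a j) + ∑ i, σ i * ∑ j, F i j * z j := by
      simp only [mul_add, Finset.sum_add_distrib]
      rw [add_comm]
      congr 1
      simp_rw [Finset.mul_sum]
      rw [Finset.sum_comm]
      exact Finset.sum_congr rfl fun i _ => Finset.sum_congr rfl fun j _ => by ring
    rw [hswap, mul_add]
    have : ∀ i ∈ Finset.univ, b i * σ i ≤ σ i * ((1 / (n:ℝ)) * ∑ j, F i j * z j) := by
      intro i _
      have := mul_le_mul_of_nonneg_left (hzf i) (hσ i)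
      linarith [this]
    have h2 : ∑ i, b i * σ i ≤ ∑ i, σ i * ((1 / (n:ℝ)) * ∑ j, F i j * z j) :=
      Finset.sum_le_sum this
    have h3 : ∑ i, σ i * ((1 / (n:ℝ)) * ∑ j, F i j * z j)
        = (1/(n:ℝ)) * ∑ i, σ i * ∑ j, F i j * z j := by
      rw [Finset.mul_sum]; congr 1; ext i; ring
    rw [h3] at h2
    linarith
  refine key.trans ?_
  have : ∑ j, z j * ((∑ i, F i j * σ i) + a j) ≤ ∑ j, |(∑ i, F i j * σ i) + a j| := by
    apply Finset.sum_le_sum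
    intro j _
    calc z j * ((∑ i, F i j * σ i) + a j) ≤ |z j * ((∑ i, F i j * σ i) + a j)| := le_abs_self _
    _ = |z j| * |(∑ i, F i j * σ i) + a j| := abs_mul _ _
    _ ≤ 1 * |(∑ i, F i j * σ i) + a j| := by
        apply mul_le_mul_of_nonneg_right (hz j) (abs_nonneg _)
    _ = _ := one_mul _
  have h4 := mul_le_mul_of_nonneg_left this (by positivity : (0:ℝ) ≤ 1/(n:ℝ))
  linarith

section main
variable (p n : ℕ) (F : Matrix (Fin p) (Fin n) ℝ) (b : Fin p → ℝ) (a : Fin n → ℝ)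

noncomputable def phiL : (Fin n → ℝ) →ₗ[ℝ] (Fin p → ℝ) × ℝ where
  toFun z := (fun i => (1/(n:ℝ)) * ∑ j, F i j * z j, (1/(n:ℝ)) * ∑ j, z j * a j)
  map_add' x y := by
    refine Prod.ext (funext fun i => ?_) ?_ <;>
    · simp only [Prod.fst_add, Prod.snd_add, Pi.add_apply, Finset.mul_sum,
        ← Finset.sum_add_distrib]
      exact Finset.sum_congr rfl fun j _ => by ring
  map_smul' c x := by
    refine Prod.ext (funext fun i => ?_) ?_ <;>
    · simp only [Prod.smul_fst, Prod.smul_snd, Pi.smul_apply, smul_eq_mul,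
        RingHom.id_apply, Finset.mul_sum]
      exact Finset.sum_congr rfl fun j _ => by ring

end main

/-- Lagrangian duality for a linear program over the box `[-1,1]^n`
intersected with the halfspaces `(1/n) F z ≥ b`. -/
theorem stmt0 (p n : ℕ) (hn : 0 < n) (F : Matrix (Fin p) (Fin n) ℝ)
    (b : Fin p → ℝ) (a : Fin n → ℝ)
    (hne : ∃ z : Fin n → ℝ, (∀ j, |z j| ≤ 1) ∧
      ∀ i, b i ≤ (1 / (n : ℝ)) * ∑ j, F i j * z j) :
    sSup {v : ℝ | ∃ z : Fin n → ℝ, (∀ j, |z j| ≤ 1) ∧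
        (∀ i, b i ≤ (1 / (n : ℝ)) * ∑ j, F i j * z j) ∧
        v = (1 / (n : ℝ)) * ∑ j, z j * a j} =
    sInf {v : ℝ | ∃ σ : Fin p → ℝ, (∀ i, 0 ≤ σ i) ∧
        v = -(∑ i, b i * σ i) + (1 / (n : ℝ)) * ∑ j, |(∑ i, F i j * σ i) + a j|} := by
  set P := {v : ℝ | ∃ z : Fin n → ℝ, (∀ j, |z j| ≤ 1) ∧
        (∀ i, b i ≤ (1 / (n : ℝ)) * ∑ j, F i j * z j) ∧
        v = (1 / (n : ℝ)) * ∑ j, z j * a j} with hP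
  set D := {v : ℝ | ∃ σ : Fin p → ℝ, (∀ i, 0 ≤ σ i) ∧
        v = -(∑ i, b i * σ i) + (1 / (n : ℝ)) * ∑ j, |(∑ i, F i j * σ i) + a j|} with hD
  obtain ⟨z₀, hz₀, hz₀f⟩ := hne
  have hPne : P.Nonempty := ⟨_, z₀, hz₀, hz₀f, rfl⟩
  have hDne : D.Nonempty :=
    ⟨-(∑ i, b i * (0:ℝ)) + (1/(n:ℝ)) * ∑ j, |(∑ i, F i j * (0:ℝ)) + a j|,
      0, fun _ => le_rfl, rfl⟩
  have weak : ∀ x ∈ P, ∀ y ∈ D, x ≤ y := by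
    rintro x ⟨z, hz, hzf, rfl⟩ y ⟨σ, hσ, rfl⟩
    exact weakdual p n hn F b a z σ hz hzf hσ
  have hPbdd : BddAbove P := ⟨hDne.choose, fun x hx => weak x hx _ hDne.choose_spec⟩
  have hDbdd : BddBelow D := ⟨hPne.choose, fun y hy => weak _ hPne.choose_spec y hy⟩
  have hle : sSup P ≤ sInf D :=
    csSup_le hPne fun x hx => le_csInf hDne fun y hy => weak x hx y hy
  refine le_antisymm hle (le_of_forall_pos_le_add fun ε hε => ?_)
  -- Strong duality direction
  set vstar := sSup P with hv
  -- The compact convex image set and the closed convex target set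
  set K : Set ((Fin p → ℝ) × ℝ) := (phiL p n F a) '' {z | ∀ j, |z j| ≤ 1} with hK
  set Q : Set ((Fin p → ℝ) × ℝ) := {x | (∀ i, b i ≤ x.1 i) ∧ vstar + ε ≤ x.2} with hQ
  have hBcompact : IsCompact {z : Fin n → ℝ | ∀ j, |z j| ≤ 1} := by
    have : {z : Fin n → ℝ | ∀ j, |z j| ≤ 1}
        = Set.pi Set.univ (fun _ : Fin n => Set.Icc (-1:ℝ) 1) := by
      ext z; simp only [Set.mem_univ_pi, Set.mem_Icc, Set.mem_setOf_eq, abs_le]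
    rw [this]
    exact isCompact_univ_pi fun _ => isCompact_Icc
  have hKcompact : IsCompact K := hBcompact.image (phiL p n F a).continuous_of_finiteDimensional
  have hKconv : Convex ℝ K := by
    refine Convex.linear_image ?_ _
    intro x hx y hy s t hs ht hst j
    calc |s * x j + t * y j| ≤ |s * x j| + |t * y j| := abs_add_le _ _
    _ = s * |x j| + t * |y j| := by rw [abs_mul, abs_mul, abs_of_nonneg hs, abs_of_nonneg ht]
    _ ≤ s * 1 + t * 1 := by
        gcongr
        exacts [hx j, hy j]
    _ = 1 := by linarith
  have hQclosed : IsClosed Q := by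
    have : Q = (⋂ i, {x : (Fin p → ℝ) × ℝ | b i ≤ x.1 i})
        ∩ {x : (Fin p → ℝ) × ℝ | vstar + ε ≤ x.2} := by
      ext x; simp [hQ, Set.mem_iInter]
    rw [this]
    refine (isClosed_iInter fun i => isClosed_le continuous_const ?_).inter
      (isClosed_le continuous_const continuous_snd)
    exact (continuous_apply i).comp continuous_fst
  have hQconv : Convex ℝ Q := by
    rintro x ⟨hx1, hx2⟩ y ⟨hy1, hy2⟩ s t hs ht hst
    constructor
    · intro i
      have h1 := mul_le_mul_of_nonneg_left (hx1 i) hs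
      have h2 := mul_le_mul_of_nonneg_left (hy1 i) ht
      have h3 : s * b i + t * b i = b i := by rw [← add_mul, hst, one_mul]
      simp only [Prod.fst_add, Prod.smul_fst, Pi.add_apply, Pi.smul_apply, smul_eq_mul]
      linarith
    · have h1 := mul_le_mul_of_nonneg_left hx2 hs
      have h2 := mul_le_mul_of_nonneg_left hy2 ht
      have h3 : s * (vstar + ε) + t * (vstar + ε) = vstar + ε := by
        rw [← add_mul, hst, one_mul]
      simp only [Prod.snd_add, Prod.smul_snd, smul_eq_mul]
      linarith
  have hdisj : Disjoint K Q := by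
    rw [Set.disjoint_left]
    rintro x ⟨z, hz, rfl⟩ ⟨hfeas, hval⟩
    have hmem : (1 / (n : ℝ)) * ∑ j, z j * a j ∈ P := ⟨z, hz, fun i => hfeas i, rfl⟩
    have := le_csSup hPbdd hmem
    have h2 : vstar + ε ≤ (1 / (n : ℝ)) * ∑ j, z j * a j := hval
    linarith
  obtain ⟨f, us, vs, hfK, husvs, hfQ⟩ :=
    geometric_hahn_banach_compact_closed hKconv hKcompact hQconv hQclosed hdisj
  -- decompose the functional
  set σ' : Fin p → ℝ := fun i => f ((Pi.single i 1 : Fin p → ℝ), (0:ℝ)) with hσ'def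
  set τ : ℝ := f ((0 : Fin p → ℝ), (1:ℝ)) with hτdef
  have frep : ∀ x : (Fin p → ℝ) × ℝ, f x = (∑ i, x.1 i * σ' i) + x.2 * τ := by
    intro x
    have hx : x = (∑ i, x.1 i • ((Pi.single i 1 : Fin p → ℝ), (0:ℝ)))
        + x.2 • ((0 : Fin p → ℝ), (1:ℝ)) := by
      refine Prod.ext ?_ ?_
      · simp only [Prod.fst_add, Prod.fst_sum, Prod.smul_fst, Prod.smul_snd, smul_zero,
          smul_eq_mul, mul_one]
        funext j
        simp [Finset.sum_apply, Pi.single_apply, Finset.sum_ite_eq]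
      · simp only [Prod.snd_add, Prod.snd_sum, Prod.smul_fst, Prod.smul_snd, smul_zero,
          smul_eq_mul, mul_one]
        simp
    conv_lhs => rw [hx]
    rw [map_add, map_sum, map_smul]
    simp only [smul_eq_mul]
    congr 1
    exact Finset.sum_congr rfl fun i _ => by rw [map_smul]; simp [smul_eq_mul]; exact Or.inl rfl
  -- the baseline value of f on the corner of Q
  have hbQ : ((b, vstar + ε) : (Fin p → ℝ) × ℝ) ∈ Q := ⟨fun i => le_rfl, le_rfl⟩
  have hC : vs < (∑ i, b i * σ' i) + (vstar + ε) * τ := by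
    have := hfQ _ hbQ
    rwa [frep] at this
  -- dual multipliers are nonnegative
  have hσ' : ∀ i, 0 ≤ σ' i := by
    intro i
    by_contra h
    push_neg at h
    set C := (∑ k, b k * σ' k) + (vstar + ε) * τ with hCdef
    set M := (C - vs + 1) / (-σ' i) with hMdef
    have hM : 0 < M := div_pos (by linarith) (by linarith)
    have hq : ((fun k => b k + M * (Pi.single i 1 : Fin p → ℝ) k, vstar + ε)
        : (Fin p → ℝ) × ℝ) ∈ Q := by
      refine ⟨fun k => ?_, le_rfl⟩
      have h0 : (0:ℝ) ≤ (Pi.single i 1 : Fin p → ℝ) k := by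
        rcases eq_or_ne k i with rfl | hk
        · simp
        · simp [Pi.single_apply, hk]
      show b k ≤ b k + M * (Pi.single i 1 : Fin p → ℝ) k
      nlinarith
    have hfq := hfQ _ hq
    rw [frep] at hfq
    simp only at hfq
    have hsum : ∑ k, (b k + M * (Pi.single i 1 : Fin p → ℝ) k) * σ' k
        = (∑ k, b k * σ' k) + M * σ' i := by
      simp only [add_mul, Finset.sum_add_distrib]
      congr 1
      rw [Finset.sum_eq_single i]
      · simp
      · intro k _ hk; simp [Pi.single_apply, hk]
      · intro hk; exact absurd (Finset.mem_univ i) hk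
    rw [hsum] at hfq
    have hMσ : M * σ' i = -(C - vs + 1) := by
      rw [hMdef, div_neg, neg_mul, div_mul_cancel₀ _ h.ne]
    rw [hMσ] at hfq
    simp only [hCdef] at hfq
    linarith
  have hτ0 : 0 ≤ τ := by
    by_contra h
    push_neg at h
    set C := (∑ k, b k * σ' k) + (vstar + ε) * τ with hCdef
    set M := (C - vs + 1) / (-τ) with hMdef
    have hM : 0 < M := div_pos (by linarith) (by linarith)
    have hq : ((b, vstar + ε + M) : (Fin p → ℝ) × ℝ) ∈ Q :=
      ⟨fun i => le_rfl, by show vstar + ε ≤ vstar + ε + M; linarith⟩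
    have hfq := hfQ _ hq
    rw [frep] at hfq
    simp only at hfq
    have hMτ : M * τ = -(C - vs + 1) := by
      rw [hMdef, div_neg, neg_mul, div_mul_cancel₀ _ h.ne]
    have : (vstar + ε + M) * τ = (vstar + ε) * τ - (C - vs + 1) := by
      rw [add_mul, hMτ]; ring
    rw [this] at hfq
    simp only [hCdef] at hfq
    linarith
  have hτ : 0 < τ := by
    rcases hτ0.lt_or_eq with h | h
    · exact h
    exfalso
    have hK0 : phiL p n F a z₀ ∈ K := ⟨z₀, hz₀, rfl⟩
    have h1 := hfK _ hK0
    rw [frep] at h1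
    have hq : (( (phiL p n F a z₀).1, vstar + ε) : (Fin p → ℝ) × ℝ) ∈ Q :=
      ⟨fun i => hz₀f i, le_rfl⟩
    have h2 := hfQ _ hq
    rw [frep] at h2
    simp only [← h, mul_zero, add_zero] at h1 h2
    linarith
  -- define the dual variable
  set lam : Fin p → ℝ := fun i => σ' i / τ with hlamdef
  have hlam : ∀ i, 0 ≤ lam i := fun i => div_nonneg (hσ' i) hτ.le
  have hστ : ∀ i, σ' i = τ * lam i := by
    intro i; rw [hlamdef]; field_simp [mul_comm]
  set w : Fin n → ℝ := fun j => (∑ i, F i j * lam i) + a j with hwdef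
  set zs : Fin n → ℝ := fun j => if 0 ≤ w j then (1:ℝ) else -1 with hzsdef
  have hzs : ∀ j, |zs j| ≤ 1 := by
    intro j
    show |if 0 ≤ w j then (1:ℝ) else -1| ≤ 1
    split_ifs <;> simp
  have hzsw : ∀ j, zs j * w j = |w j| := by
    intro j
    show (if 0 ≤ w j then (1:ℝ) else -1) * w j = |w j|
    by_cases hj : 0 ≤ w j
    · rw [if_pos hj, one_mul, abs_of_nonneg hj]
    · push_neg at hj
      rw [if_neg (not_le.mpr hj), abs_of_neg hj]; ring
  have hKzs : phiL p n F a zs ∈ K := ⟨zs, hzs, rfl⟩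
  have h1 := hfK _ hKzs
  rw [frep] at h1
  have hcomb : (∑ j, zs j * a j) + ∑ i, lam i * ∑ j, F i j * zs j = ∑ j, |w j| := by
    rw [← sumswap p n F a zs lam]
    exact Finset.sum_congr rfl fun j _ => hzsw j
  have hval : (∑ i, (phiL p n F a zs).1 i * σ' i) + (phiL p n F a zs).2 * τ
      = (τ/(n:ℝ)) * ∑ j, |w j| := by
    have hfst : (phiL p n F a zs).1 = fun i => (1/(n:ℝ)) * ∑ j, F i j * zs j := rfl
    have hsnd : (phiL p n F a zs).2 = (1/(n:ℝ)) * ∑ j, zs j * a j := rfl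
    rw [hfst, hsnd]
    simp only [hστ]
    have h3 : ∑ i, ((1/(n:ℝ)) * ∑ j, F i j * zs j) * (τ * lam i)
        = (τ/(n:ℝ)) * ∑ i, lam i * ∑ j, F i j * zs j := by
      rw [Finset.mul_sum]
      exact Finset.sum_congr rfl fun i _ => by ring
    rw [h3]
    linear_combination (τ/(n:ℝ)) * hcomb
  rw [hval] at h1
  have h2 : vs < τ * ((∑ i, b i * lam i) + (vstar + ε)) := by
    have : (∑ i, b i * σ' i) + (vstar + ε) * τ = τ * ((∑ i, b i * lam i) + (vstar + ε)) := by
      simp only [hστ]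
      rw [mul_add, Finset.mul_sum]
      congr 1
      · exact Finset.sum_congr rfl fun i _ => by ring
      · ring
    rw [← this]; exact hC
  have hchain : τ * ((1/(n:ℝ)) * ∑ j, |w j|) < τ * ((∑ i, b i * lam i) + (vstar + ε)) := by
    have : (τ/(n:ℝ)) * ∑ j, |w j| = τ * ((1/(n:ℝ)) * ∑ j, |w j|) := by ring
    rw [← this]; linarith
  have hfinal : (1/(n:ℝ)) * ∑ j, |w j| < (∑ i, b i * lam i) + (vstar + ε) :=
    (mul_lt_mul_iff_right₀ hτ).mp hchain
  have hmem : -(∑ i, b i * lam i) + (1/(n:ℝ)) * ∑ j, |(∑ i, F i j * lam i) + a j| ∈ D :=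
    ⟨lam, hlam, rfl⟩
  have hDle := csInf_le hDbdd hmem
  have hww : ∑ j, |(∑ i, F i j * lam i) + a j| = ∑ j, |w j| :=
    Finset.sum_congr rfl fun j _ => by rw [hwdef]
  rw [hww] at hDle
  linarith
end

section
/- For any vector a ∈ ℝⁿ, matrix F ∈ ℝ^{p×n}, vectors b ∈ ℝᵖ and ε > 0, the maximum of (1/n)·zᵀa over z ∈ [-1,1]ⁿ satisfying ‖(1/n)Fz − b‖_∞ ≤ ε equals the minimum over σ ∈ ℝᵖ of (−bᵀσ + (1/n)‖Fᵀσ + a‖₁ + ε‖σ‖₁), provided the constraint set is nonempty. -/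
noncomputable def sg (x : ℝ) : ℝ := if x < 0 then -1 else 1

lemma sg_abs (x : ℝ) : |sg x| ≤ 1 := by
  unfold sg; split <;> simp

lemma sg_mul (x : ℝ) : sg x * x = |x| := by
  unfold sg; split
  · rw [abs_of_neg ‹_›]; ring
  · rw [abs_of_nonneg (not_lt.1 ‹_›)]; ring

lemma double_sum_swap (p n : ℕ) (F : Matrix (Fin p) (Fin n) ℝ) (z : Fin n → ℝ)
    (σ : Fin p → ℝ) :
    ∑ j, z j * ∑ i, F i j * σ i = ∑ i, σ i * ∑ j, F i j * z j := by
  simp_rw [Finset.mul_sum]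
  rw [Finset.sum_comm]
  apply Finset.sum_congr rfl
  intro j _
  apply Finset.sum_congr rfl
  intro i _
  ring

lemma obj_abs_le (n : ℕ) (a z : Fin n → ℝ) (hz : ∀ j, |z j| ≤ 1) :
    |(1 / (n : ℝ)) * ∑ j, z j * a j| ≤ (1 / (n : ℝ)) * ∑ j, |a j| := by
  have hc : (0:ℝ) ≤ 1 / (n : ℝ) := by positivity
  rw [abs_mul, abs_of_nonneg hc]
  apply mul_le_mul_of_nonneg_left _ hc
  calc |∑ j, z j * a j| ≤ ∑ j, |z j * a j| := Finset.abs_sum_le_sum_abs _ _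
  _ ≤ ∑ j, |a j| := by
      apply Finset.sum_le_sum
      intro j _
      rw [abs_mul]
      calc |z j| * |a j| ≤ 1 * |a j| := mul_le_mul_of_nonneg_right (hz j) (abs_nonneg _)
      _ = |a j| := one_mul _

lemma weak_duality (p n : ℕ) (F : Matrix (Fin p) (Fin n) ℝ)
    (b : Fin p → ℝ) (a : Fin n → ℝ) (ε : ℝ) (z : Fin n → ℝ) (σ : Fin p → ℝ)
    (hz : ∀ j, |z j| ≤ 1)
    (hf : ∀ i, |(1 / (n : ℝ)) * (∑ j, F i j * z j) - b i| ≤ ε) :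
    (1 / (n : ℝ)) * ∑ j, z j * a j ≤
      -(∑ i, b i * σ i) + (1 / (n : ℝ)) * (∑ j, |(∑ i, F i j * σ i) + a j|)
        + ε * ∑ i, |σ i| := by
  have hc : (0:ℝ) ≤ 1 / (n : ℝ) := by positivity
  have key : (1 / (n : ℝ)) * ∑ j, z j * a j =
      (1 / (n : ℝ)) * ∑ j, z j * ((∑ i, F i j * σ i) + a j)
        - (∑ i, σ i * ((1 / (n : ℝ)) * (∑ j, F i j * z j) - b i))
        - ∑ i, b i * σ i := by
    have e1 : ∑ j, z j * ((∑ i, F i j * σ i) + a j)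
        = (∑ i, σ i * ∑ j, F i j * z j) + ∑ j, z j * a j := by
      simp_rw [mul_add]
      rw [Finset.sum_add_distrib, double_sum_swap p n F z σ]
    have e2 : ∑ i, σ i * ((1 / (n : ℝ)) * (∑ j, F i j * z j) - b i)
        = (1 / (n : ℝ)) * (∑ i, σ i * ∑ j, F i j * z j) - ∑ i, b i * σ i := by
      simp_rw [mul_sub]
      rw [Finset.sum_sub_distrib, Finset.mul_sum]
      congr 1
      · apply Finset.sum_congr rfl; intro i _; ring
      · apply Finset.sum_congr rfl; intro i _; ring
    rw [e1, e2]
    ring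
  rw [key]
  have h1 : ∑ j, z j * ((∑ i, F i j * σ i) + a j) ≤ ∑ j, |(∑ i, F i j * σ i) + a j| := by
    apply Finset.sum_le_sum
    intro j _
    calc z j * ((∑ i, F i j * σ i) + a j) ≤ |z j * ((∑ i, F i j * σ i) + a j)| := le_abs_self _
    _ = |z j| * |(∑ i, F i j * σ i) + a j| := abs_mul _ _
    _ ≤ 1 * |(∑ i, F i j * σ i) + a j| := by
        apply mul_le_mul_of_nonneg_right (hz j) (abs_nonneg _)
    _ = _ := one_mul _
  have h2 : -(∑ i, σ i * ((1 / (n : ℝ)) * (∑ j, F i j * z j) - b i)) ≤ ε * ∑ i, |σ i| := by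
    rw [← Finset.sum_neg_distrib, Finset.mul_sum]
    apply Finset.sum_le_sum
    intro i _
    calc -(σ i * ((1 / (n : ℝ)) * (∑ j, F i j * z j) - b i))
        ≤ |σ i * ((1 / (n : ℝ)) * (∑ j, F i j * z j) - b i)| := neg_le_abs _
    _ = |σ i| * |(1 / (n : ℝ)) * (∑ j, F i j * z j) - b i| := abs_mul _ _
    _ ≤ |σ i| * ε := mul_le_mul_of_nonneg_left (hf i) (abs_nonneg _)
    _ = ε * |σ i| := mul_comm _ _
  have h3 := mul_le_mul_of_nonneg_left h1 hc
  linarith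


lemma exists_dual_le (p n : ℕ) (F : Matrix (Fin p) (Fin n) ℝ)
    (b : Fin p → ℝ) (a : Fin n → ℝ) (ε : ℝ) (hε : 0 < ε)
    (zs : Fin n → ℝ) (hzs1 : ∀ j, |zs j| ≤ 1)
    (hzs2 : ∀ i, |(1 / (n : ℝ)) * (∑ j, F i j * zs j) - b i| ≤ ε)
    (hmax : ∀ z : Fin n → ℝ, (∀ j, |z j| ≤ 1) →
      (∀ i, |(1 / (n : ℝ)) * (∑ j, F i j * z j) - b i| ≤ ε) →
      (1 / (n : ℝ)) * ∑ j, z j * a j ≤ (1 / (n : ℝ)) * ∑ j, zs j * a j)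
    (δ : ℝ) (hδ : 0 < δ) :
    ∃ σ : Fin p → ℝ,
      -(∑ i, b i * σ i) + (1 / (n : ℝ)) * (∑ j, |(∑ i, F i j * σ i) + a j|)
        + ε * ∑ i, |σ i| ≤ ((1 / (n : ℝ)) * ∑ j, zs j * a j) + δ := by
  set T : ℝ := (1 / (n : ℝ)) * ∑ j, |a j| with hT
  set M : ℝ := (1 / (n : ℝ)) * ∑ j, zs j * a j with hM
  set A : Set ((Fin p → ℝ) × ℝ) :=
    {q | ∃ z : Fin n → ℝ, ∃ u : Fin p → ℝ, (∀ j, |z j| ≤ 1) ∧ (∀ i, |u i| ≤ ε) ∧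
      (∀ i, q.1 i = (1 / (n : ℝ)) * (∑ j, F i j * z j) - b i + u i) ∧
      -T ≤ q.2 ∧ q.2 ≤ (1 / (n : ℝ)) * ∑ j, z j * a j} with hA
  -- convexity
  have hconv : Convex ℝ A := by
    rintro q1 ⟨z1, u1, hz1, hu1, hq1, hl1, hr1⟩ q2 ⟨z2, u2, hz2, hu2, hq2, hl2, hr2⟩
      θ1 θ2 h1 h2 hsum
    refine ⟨θ1 • z1 + θ2 • z2, θ1 • u1 + θ2 • u2, ?_, ?_, ?_, ?_, ?_⟩
    · intro j
      simp only [Pi.add_apply, Pi.smul_apply, smul_eq_mul]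
      calc |θ1 * z1 j + θ2 * z2 j| ≤ |θ1 * z1 j| + |θ2 * z2 j| := abs_add_le _ _
      _ ≤ θ1 * 1 + θ2 * 1 := by
          rw [abs_mul, abs_mul, abs_of_nonneg h1, abs_of_nonneg h2]
          gcongr <;> [exact hz1 j; exact hz2 j]
      _ = 1 := by linarith
    · intro i
      simp only [Pi.add_apply, Pi.smul_apply, smul_eq_mul]
      calc |θ1 * u1 i + θ2 * u2 i| ≤ |θ1 * u1 i| + |θ2 * u2 i| := abs_add_le _ _
      _ ≤ θ1 * ε + θ2 * ε := by
          rw [abs_mul, abs_mul, abs_of_nonneg h1, abs_of_nonneg h2]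
          gcongr <;> [exact hu1 i; exact hu2 i]
      _ = ε := by rw [← add_mul, hsum, one_mul]
    · intro i
      have hFz : ∑ j, F i j * (θ1 • z1 + θ2 • z2) j
          = θ1 * (∑ j, F i j * z1 j) + θ2 * (∑ j, F i j * z2 j) := by
        simp only [Pi.add_apply, Pi.smul_apply, smul_eq_mul]
        rw [Finset.mul_sum, Finset.mul_sum, ← Finset.sum_add_distrib]
        apply Finset.sum_congr rfl
        intro j _
        ring
      have : (θ1 • q1 + θ2 • q2).1 i = θ1 * q1.1 i + θ2 * q2.1 i := by
        simp
      rw [this, hq1 i, hq2 i, hFz]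
      simp only [Pi.add_apply, Pi.smul_apply, smul_eq_mul]
      linear_combination (-(b i)) * hsum
    · have : (θ1 • q1 + θ2 • q2).2 = θ1 * q1.2 + θ2 * q2.2 := by simp
      rw [this]
      have e : -T = θ1 * (-T) + θ2 * (-T) := by rw [← add_mul, hsum, one_mul]
      rw [e]
      exact add_le_add (mul_le_mul_of_nonneg_left hl1 h1) (mul_le_mul_of_nonneg_left hl2 h2)
    · have h2' : (θ1 • q1 + θ2 • q2).2 = θ1 * q1.2 + θ2 * q2.2 := by simp
      have hobj : (1 / (n : ℝ)) * ∑ j, (θ1 • z1 + θ2 • z2) j * a j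
          = θ1 * ((1 / (n : ℝ)) * ∑ j, z1 j * a j)
            + θ2 * ((1 / (n : ℝ)) * ∑ j, z2 j * a j) := by
        simp only [Pi.add_apply, Pi.smul_apply, smul_eq_mul]
        have e : ∑ j, (θ1 * z1 j + θ2 * z2 j) * a j
            = θ1 * ∑ j, z1 j * a j + θ2 * ∑ j, z2 j * a j := by
          rw [Finset.mul_sum, Finset.mul_sum, ← Finset.sum_add_distrib]
          apply Finset.sum_congr rfl
          intro j _
          ring
        rw [e]
        ring
      rw [h2', hobj]
      exact add_le_add (mul_le_mul_of_nonneg_left hr1 h1) (mul_le_mul_of_nonneg_left hr2 h2)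
  -- closedness
  have hTnn : 0 ≤ T := by
    rw [hT]; positivity
  have hobjT : ∀ z : Fin n → ℝ, (∀ j, |z j| ≤ 1) →
      |(1 / (n : ℝ)) * ∑ j, z j * a j| ≤ T := fun z hz => obj_abs_le n a z hz
  have hclosed : IsClosed A := by
    set K : Set ((Fin n → ℝ) × (Fin p → ℝ) × ℝ) :=
      ((Set.univ.pi fun _ => Set.Icc (-1:ℝ) 1) ×ˢ
        ((Set.univ.pi fun _ => Set.Icc (-ε) ε) ×ˢ Set.Icc (-T) T)) ∩
        {y | y.2.2 ≤ (1 / (n : ℝ)) * ∑ j, y.1 j * a j} with hK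
    have hKcomp : IsCompact K := by
      apply IsCompact.inter_right
      · exact (isCompact_univ_pi fun _ => isCompact_Icc).prod
          ((isCompact_univ_pi fun _ => isCompact_Icc).prod isCompact_Icc)
      · apply isClosed_le
        · fun_prop
        · apply Continuous.mul continuous_const
          apply continuous_finset_sum
          intro j _
          exact ((continuous_apply j).comp continuous_fst).mul continuous_const
    set G : ((Fin n → ℝ) × (Fin p → ℝ) × ℝ) → (Fin p → ℝ) × ℝ :=
      fun y => (fun i => (1 / (n : ℝ)) * (∑ j, F i j * y.1 j) - b i + y.2.1 i, y.2.2) with hG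
    have hGcont : Continuous G := by
      apply Continuous.prodMk
      · apply continuous_pi
        intro i
        apply Continuous.add
        · apply Continuous.sub _ continuous_const
          apply Continuous.mul continuous_const
          apply continuous_finset_sum
          intro j _
          exact Continuous.mul continuous_const ((continuous_apply j).comp continuous_fst)
        · exact (continuous_apply i).comp (continuous_fst.comp continuous_snd)
      · exact continuous_snd.comp continuous_snd
    have hAK : A = G '' K := by
      ext q
      constructor
      · rintro ⟨z, u, hz, hu, hq, hl, hr⟩
        refine ⟨(z, u, q.2), ⟨⟨?_, ?_, ?_⟩, hr⟩, ?_⟩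
        · intro j _
          exact abs_le.mp (hz j)
        · intro i _
          exact abs_le.mp (hu i)
        · constructor
          · exact hl
          · exact hr.trans ((le_abs_self _).trans (hobjT z hz))
        · apply Prod.ext
          · exact funext fun i => (hq i).symm
          · rfl
      · rintro ⟨⟨z, u, t⟩, ⟨⟨hzK, huK, htK⟩, hle⟩, rfl⟩
        refine ⟨z, u, ?_, ?_, fun i => rfl, htK.1, hle⟩
        · intro j
          exact abs_le.mpr (hzK j (Set.mem_univ j))
        · intro i
          exact abs_le.mpr (huK i (Set.mem_univ i))
    rw [hAK]
    exact (hKcomp.image hGcont).isClosed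
  -- the point is outside
  have hnotmem : ((0 : Fin p → ℝ), M + δ) ∉ A := by
    rintro ⟨z, u, hz, hu, hq, hl, hr⟩
    have hfeas : ∀ i, |(1 / (n : ℝ)) * (∑ j, F i j * z j) - b i| ≤ ε := by
      intro i
      have h := hq i
      simp only [Pi.zero_apply] at h
      have : (1 / (n : ℝ)) * (∑ j, F i j * z j) - b i = -u i := by linarith
      rw [this, abs_neg]
      exact hu i
    have hle := hmax z hz hfeas
    simp only at hr
    linarith
  -- separation
  obtain ⟨f, r, hfa, hfr⟩ := geometric_hahn_banach_closed_point hconv hclosed hnotmem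
  set σ0 : Fin p → ℝ := fun i => f (Pi.single i 1, 0) with hσ0
  set s0 : ℝ := f (0, 1) with hs0def
  have hdec : ∀ q : (Fin p → ℝ) × ℝ, f q = (∑ i, q.1 i * σ0 i) + q.2 * s0 := by
    intro q
    have hq : q = (∑ i, q.1 i • ((Pi.single i 1 : Fin p → ℝ), (0:ℝ)))
        + q.2 • ((0 : Fin p → ℝ), (1:ℝ)) := by
      apply Prod.ext
      · simp only [Prod.fst_add, Prod.fst_sum, Prod.smul_fst, smul_eq_mul, Prod.smul_mk]
        funext j
        simp [Pi.single_apply, Finset.sum_ite_eq, mul_ite]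
      · simp [Prod.snd_sum]
    conv_lhs => rw [hq]
    rw [map_add, map_sum, map_smul, smul_eq_mul]
    simp only [map_smul, smul_eq_mul]
    rfl
  have hfMδ : f ((0 : Fin p → ℝ), M + δ) = (M + δ) * s0 := by
    rw [hdec]; simp
  have hs0 : 0 < s0 := by
    have hMT : |M| ≤ T := hobjT zs hzs1
    have hqA : ((0 : Fin p → ℝ), M) ∈ A := by
      refine ⟨zs, fun i => -((1 / (n : ℝ)) * (∑ j, F i j * zs j) - b i), hzs1, ?_, ?_, ?_, le_refl _⟩
      · intro i
        rw [abs_neg]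
        exact hzs2 i
      · intro i
        simp only [Pi.zero_apply]
        ring
      · linarith [(abs_le.mp hMT).1]
    have h1 := hfa _ hqA
    rw [hdec] at h1
    simp only [Pi.zero_apply, zero_mul, Finset.sum_const_zero, zero_add] at h1
    rw [hfMδ] at hfr
    nlinarith
  -- the main inequality for all box points
  have hkey : ∀ (z : Fin n → ℝ) (u : Fin p → ℝ), (∀ j, |z j| ≤ 1) → (∀ i, |u i| ≤ ε) →
      (∑ i, ((1 / (n : ℝ)) * (∑ j, F i j * z j) - b i + u i) * σ0 i)
        + ((1 / (n : ℝ)) * ∑ j, z j * a j) * s0 < (M + δ) * s0 := by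
    intro z u hz hu
    have hmem : ((fun i => (1 / (n : ℝ)) * (∑ j, F i j * z j) - b i + u i),
        (1 / (n : ℝ)) * ∑ j, z j * a j) ∈ A := by
      refine ⟨z, u, hz, hu, fun i => rfl, ?_, le_refl _⟩
      have := hobjT z hz
      linarith [(abs_le.mp this).1]
    have h1 := hfa _ hmem
    rw [hdec] at h1
    rw [hfMδ] at hfr
    simp only at h1
    linarith
  -- choose the maximizing z, u
  set z : Fin n → ℝ := fun j => sg ((∑ i, F i j * σ0 i) + a j * s0) with hz
  set u : Fin p → ℝ := fun i => ε * sg (σ0 i) with hu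
  have hzb : ∀ j, |z j| ≤ 1 := fun j => sg_abs _
  have hub : ∀ i, |u i| ≤ ε := by
    intro i
    rw [hu]
    simp only
    rw [abs_mul, abs_of_pos hε]
    calc ε * |sg (σ0 i)| ≤ ε * 1 := mul_le_mul_of_nonneg_left (sg_abs _) hε.le
    _ = ε := mul_one _
  have h := hkey z u hzb hub
  -- rewrite the LHS of h
  have hAeq : ∑ i, ((1 / (n : ℝ)) * (∑ j, F i j * z j) - b i + u i) * σ0 i
      = (1 / (n : ℝ)) * (∑ i, σ0 i * ∑ j, F i j * z j) - (∑ i, b i * σ0 i)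
        + ε * ∑ i, |σ0 i| := by
    simp_rw [add_mul, sub_mul, Finset.sum_add_distrib, Finset.sum_sub_distrib]
    congr 1
    · congr 1
      · rw [Finset.mul_sum]
        apply Finset.sum_congr rfl
        intro i _
        ring
    · rw [Finset.mul_sum]
      apply Finset.sum_congr rfl
      intro i _
      simp only [hu]
      rw [mul_assoc, sg_mul]
  have hBeq : (1 / (n : ℝ)) * (∑ i, σ0 i * ∑ j, F i j * z j)
      + ((1 / (n : ℝ)) * ∑ j, z j * a j) * s0
      = (1 / (n : ℝ)) * ∑ j, |(∑ i, F i j * σ0 i) + a j * s0| := by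
    rw [← double_sum_swap p n F z σ0]
    have e : ∑ j, z j * ∑ i, F i j * σ0 i + (∑ j, z j * a j) * s0
        = ∑ j, |(∑ i, F i j * σ0 i) + a j * s0| := by
      rw [Finset.sum_mul, ← Finset.sum_add_distrib]
      apply Finset.sum_congr rfl
      intro j _
      simp only [hz]
      rw [← sg_mul ((∑ i, F i j * σ0 i) + a j * s0)]
      ring
    linear_combination (1 / (n : ℝ)) * e
  refine ⟨fun i => σ0 i / s0, ?_⟩
  have hs0' : s0 ≠ 0 := ne_of_gt hs0
  have hfinal : (-(∑ i, b i * (σ0 i / s0))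
      + (1 / (n : ℝ)) * (∑ j, |(∑ i, F i j * (σ0 i / s0)) + a j|)
      + ε * ∑ i, |σ0 i / s0|) * s0
      = -(∑ i, b i * σ0 i) + (1 / (n : ℝ)) * (∑ j, |(∑ i, F i j * σ0 i) + a j * s0|)
        + ε * ∑ i, |σ0 i| := by
    have t1 : (∑ i, b i * (σ0 i / s0)) * s0 = ∑ i, b i * σ0 i := by
      rw [Finset.sum_mul]
      apply Finset.sum_congr rfl
      intro i _
      field_simp
    have t2 : ∀ j, |(∑ i, F i j * (σ0 i / s0)) + a j| * s0
        = |(∑ i, F i j * σ0 i) + a j * s0| := by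
      intro j
      have hx : ((∑ i, F i j * (σ0 i / s0)) + a j) * s0 = (∑ i, F i j * σ0 i) + a j * s0 := by
        rw [add_mul, Finset.sum_mul]
        congr 1
        apply Finset.sum_congr rfl
        intro i _
        field_simp
      calc |(∑ i, F i j * (σ0 i / s0)) + a j| * s0
          = |(∑ i, F i j * (σ0 i / s0)) + a j| * |s0| := by rw [abs_of_pos hs0]
      _ = |((∑ i, F i j * (σ0 i / s0)) + a j) * s0| := (abs_mul _ _).symm
      _ = |(∑ i, F i j * σ0 i) + a j * s0| := by rw [hx]
    have t3 : ∀ i, |σ0 i / s0| * s0 = |σ0 i| := by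
      intro i
      rw [abs_div, abs_of_pos hs0]
      field_simp
    rw [add_mul, add_mul, neg_mul, t1, mul_assoc, mul_assoc, Finset.sum_mul, Finset.sum_mul]
    have e2 : ∑ j, |(∑ i, F i j * (σ0 i / s0)) + a j| * s0
        = ∑ j, |(∑ i, F i j * σ0 i) + a j * s0| := Finset.sum_congr rfl fun j _ => t2 j
    have e3 : ∑ i, |σ0 i / s0| * s0 = ∑ i, |σ0 i| := Finset.sum_congr rfl fun i _ => t3 i
    rw [e2, e3]
  have hlt : (-(∑ i, b i * (σ0 i / s0))
      + (1 / (n : ℝ)) * (∑ j, |(∑ i, F i j * (σ0 i / s0)) + a j|)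
      + ε * ∑ i, |σ0 i / s0|) * s0 < (M + δ) * s0 := by
    rw [hfinal]
    linarith
  have := lt_of_mul_lt_mul_right hlt hs0.le
  rw [hM]
  linarith

/-- Strong duality between an `L∞`-norm-constrained linear maximization over the box
`[-1,1]^n` and an `L1`-regularized dual minimization. -/
theorem stmt1 (p n : ℕ) (hn : 0 < n) (F : Matrix (Fin p) (Fin n) ℝ)
    (b : Fin p → ℝ) (a : Fin n → ℝ) (ε : ℝ) (hε : 0 < ε)
    (hne : ∃ z : Fin n → ℝ, (∀ j, |z j| ≤ 1) ∧
      ∀ i, |(1 / (n : ℝ)) * (∑ j, F i j * z j) - b i| ≤ ε) :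
    sSup {v : ℝ | ∃ z : Fin n → ℝ, (∀ j, |z j| ≤ 1) ∧
        (∀ i, |(1 / (n : ℝ)) * (∑ j, F i j * z j) - b i| ≤ ε) ∧
        v = (1 / (n : ℝ)) * ∑ j, z j * a j} =
    sInf {v : ℝ | ∃ σ : Fin p → ℝ,
        v = -(∑ i, b i * σ i) + (1 / (n : ℝ)) * (∑ j, |(∑ i, F i j * σ i) + a j|)
            + ε * ∑ i, |σ i|} := by
  obtain ⟨z0, hz01, hz02⟩ := hne
  have hZc : IsCompact {z : Fin n → ℝ | (∀ j, |z j| ≤ 1) ∧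
      ∀ i, |(1 / (n : ℝ)) * (∑ j, F i j * z j) - b i| ≤ ε} := by
    have h1 : {z : Fin n → ℝ | (∀ j, |z j| ≤ 1) ∧
        ∀ i, |(1 / (n : ℝ)) * (∑ j, F i j * z j) - b i| ≤ ε}
        = (Set.univ.pi fun _ : Fin n => Set.Icc (-1:ℝ) 1) ∩
          {z | ∀ i, |(1 / (n : ℝ)) * (∑ j, F i j * z j) - b i| ≤ ε} := by
      ext z
      constructor
      · rintro ⟨h1, h2⟩
        exact ⟨Set.mem_univ_pi.mpr fun j => abs_le.mp (h1 j), h2⟩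
      · rintro ⟨h1, h2⟩
        exact ⟨fun j => abs_le.mpr (Set.mem_univ_pi.mp h1 j), h2⟩
    rw [h1]
    apply IsCompact.inter_right (isCompact_univ_pi fun _ => isCompact_Icc)
    have h2 : {z : Fin n → ℝ | ∀ i, |(1 / (n : ℝ)) * (∑ j, F i j * z j) - b i| ≤ ε}
        = ⋂ i, {z | |(1 / (n : ℝ)) * (∑ j, F i j * z j) - b i| ≤ ε} := by
      ext z; simp
    rw [h2]
    apply isClosed_iInter
    intro i
    apply isClosed_le _ continuous_const
    apply continuous_abs.comp
    apply Continuous.sub _ continuous_const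
    exact continuous_const.mul (continuous_finset_sum _ fun j _ =>
      continuous_const.mul (continuous_apply j))
  have hZne : Set.Nonempty {z : Fin n → ℝ | (∀ j, |z j| ≤ 1) ∧
      ∀ i, |(1 / (n : ℝ)) * (∑ j, F i j * z j) - b i| ≤ ε} := ⟨z0, hz01, hz02⟩
  have hcont : Continuous fun z : Fin n → ℝ => (1 / (n : ℝ)) * ∑ j, z j * a j :=
    continuous_const.mul (continuous_finset_sum _ fun j _ =>
      (continuous_apply j).mul continuous_const)
  obtain ⟨zs, hzsZ, hzsmax⟩ := hZc.exists_isMaxOn hZne hcont.continuousOn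
  obtain ⟨hzs1, hzs2⟩ := hzsZ
  have hmax : ∀ z : Fin n → ℝ, (∀ j, |z j| ≤ 1) →
      (∀ i, |(1 / (n : ℝ)) * (∑ j, F i j * z j) - b i| ≤ ε) →
      (1 / (n : ℝ)) * ∑ j, z j * a j ≤ (1 / (n : ℝ)) * ∑ j, zs j * a j :=
    fun z h1 h2 => hzsmax (⟨h1, h2⟩ : z ∈ {z : Fin n → ℝ | _ ∧ _})
  have hP : IsGreatest {v : ℝ | ∃ z : Fin n → ℝ, (∀ j, |z j| ≤ 1) ∧
      (∀ i, |(1 / (n : ℝ)) * (∑ j, F i j * z j) - b i| ≤ ε) ∧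
      v = (1 / (n : ℝ)) * ∑ j, z j * a j} ((1 / (n : ℝ)) * ∑ j, zs j * a j) := by
    constructor
    · exact ⟨zs, hzs1, hzs2, rfl⟩
    · rintro v ⟨z, h1, h2, rfl⟩
      exact hmax z h1 h2
  rw [hP.csSup_eq]
  have hlb : ∀ v ∈ {v : ℝ | ∃ σ : Fin p → ℝ,
      v = -(∑ i, b i * σ i) + (1 / (n : ℝ)) * (∑ j, |(∑ i, F i j * σ i) + a j|)
        + ε * ∑ i, |σ i|}, (1 / (n : ℝ)) * ∑ j, zs j * a j ≤ v := by
    rintro v ⟨σ, rfl⟩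
    exact weak_duality p n F b a ε zs σ hzs1 hzs2
  have hDne : Set.Nonempty {v : ℝ | ∃ σ : Fin p → ℝ,
      v = -(∑ i, b i * σ i) + (1 / (n : ℝ)) * (∑ j, |(∑ i, F i j * σ i) + a j|)
        + ε * ∑ i, |σ i|} := ⟨_, 0, rfl⟩
  apply le_antisymm
  · exact le_csInf hDne hlb
  · have hbdd : BddBelow {v : ℝ | ∃ σ : Fin p → ℝ,
        v = -(∑ i, b i * σ i) + (1 / (n : ℝ)) * (∑ j, |(∑ i, F i j * σ i) + a j|)
          + ε * ∑ i, |σ i|} := ⟨_, hlb⟩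
    refine le_of_forall_pos_le_add ?_
    intro δ hδ
    obtain ⟨σ, hσ⟩ := exists_dual_le p n F b a ε hε zs hzs1 hzs2 hmax δ hδ
    exact (csInf_le hbdd ⟨σ, rfl⟩).trans hσ
end

section
/- Let ℓ₊, ℓ₋: [-1,1] → ℝ be twice differentiable on (-1,1) with ℓ₊ decreasing and ℓ₋ increasing, and set Γ(g) := ℓ₋(g) − ℓ₊(g). Then Γ is increasing on (-1,1), and the potential well Ψ(m) defined as −m + 2ℓ₋(−1) for m ≤ Γ(−1), ℓ₊(Γ⁻¹(m)) + ℓ₋(Γ⁻¹(m)) for m ∈ (Γ(−1), Γ(1)), and m + 2ℓ₊(1) for m ≥ Γ(1), is continuous and 1-Lipschitz on ℝ. -/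
/-- With partial losses `ℓ₊` decreasing and `ℓ₋` increasing (twice differentiable on
`(-1,1)`), the score function `Γ = ℓ₋ − ℓ₊` is increasing, and the general-loss
potential well `Ψ` is continuous and 1-Lipschitz on `ℝ`. -/
theorem stmt13 (lp lm : ℝ → ℝ) (Γinv : ℝ → ℝ)
    (hlp : StrictAntiOn lp (Set.Icc (-1 : ℝ) 1))
    (hlm : StrictMonoOn lm (Set.Icc (-1 : ℝ) 1))
    (hlpd : ∀ x ∈ Set.Ioo (-1 : ℝ) 1, DifferentiableAt ℝ lp x)
    (hlmd : ∀ x ∈ Set.Ioo (-1 : ℝ) 1, DifferentiableAt ℝ lm x)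
    (hlpd2 : ∀ x ∈ Set.Ioo (-1 : ℝ) 1, DifferentiableAt ℝ (deriv lp) x)
    (hlmd2 : ∀ x ∈ Set.Ioo (-1 : ℝ) 1, DifferentiableAt ℝ (deriv lm) x)
    (hlpc : ContinuousOn lp (Set.Icc (-1 : ℝ) 1))
    (hlmc : ContinuousOn lm (Set.Icc (-1 : ℝ) 1))
    (hinv : ∀ m ∈ Set.Ioo (lm (-1) - lp (-1)) (lm 1 - lp 1),
      Γinv m ∈ Set.Icc (-1 : ℝ) 1 ∧ lm (Γinv m) - lp (Γinv m) = m) :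
    StrictMonoOn (fun g => lm g - lp g) (Set.Icc (-1 : ℝ) 1) ∧
    Continuous (fun m : ℝ =>
      if m ≤ lm (-1) - lp (-1) then -m + 2 * lm (-1)
      else if m < lm 1 - lp 1 then lp (Γinv m) + lm (Γinv m)
      else m + 2 * lp 1) ∧
    LipschitzWith 1 (fun m : ℝ =>
      if m ≤ lm (-1) - lp (-1) then -m + 2 * lm (-1)
      else if m < lm 1 - lp 1 then lp (Γinv m) + lm (Γinv m)
      else m + 2 * lp 1) := by
  have hmono : StrictMonoOn (fun g => lm g - lp g) (Set.Icc (-1 : ℝ) 1) := by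
    intro x hx y hy hxy
    have h1 := hlm hx hy hxy
    have h2 := hlp hx hy hxy
    simp only
    linarith
  have hm1 : (-1 : ℝ) ∈ Set.Icc (-1 : ℝ) 1 := by norm_num
  have h1mem : (1 : ℝ) ∈ Set.Icc (-1 : ℝ) 1 := by norm_num
  have hcd : lm (-1) - lp (-1) < lm 1 - lp 1 := hmono hm1 h1mem (by norm_num)
  have key : ∀ g₁ ∈ Set.Icc (-1 : ℝ) 1, ∀ g₂ ∈ Set.Icc (-1 : ℝ) 1, g₁ ≤ g₂ →
      |(lp g₂ + lm g₂) - (lp g₁ + lm g₁)| ≤ (lm g₂ - lp g₂) - (lm g₁ - lp g₁) := by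
    intro g₁ hg₁ g₂ hg₂ h
    have h1 : lm g₁ ≤ lm g₂ := hlm.monotoneOn hg₁ hg₂ h
    have h2 : lp g₂ ≤ lp g₁ := hlp.antitoneOn hg₁ hg₂ h
    rw [abs_le]; constructor <;> linarith
  set f : ℝ → ℝ := fun m : ℝ =>
      if m ≤ lm (-1) - lp (-1) then -m + 2 * lm (-1)
      else if m < lm 1 - lp 1 then lp (Γinv m) + lm (Γinv m)
      else m + 2 * lp 1 with hf
  have main : ∀ a b : ℝ, a ≤ b → |f b - f a| ≤ b - a := by
    intro a b hab
    by_cases hbc : b ≤ lm (-1) - lp (-1)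
    · have hac : a ≤ lm (-1) - lp (-1) := le_trans hab hbc
      simp only [hf, if_pos hbc, if_pos hac]
      rw [abs_le]; constructor <;> linarith
    · push_neg at hbc
      by_cases hac : a ≤ lm (-1) - lp (-1)
      · by_cases hbd : b < lm 1 - lp 1
        · obtain ⟨hg, hΓ⟩ := hinv b ⟨hbc, hbd⟩
          have k := key (-1) hm1 (Γinv b) hg hg.1
          simp only [hf, if_pos hac, if_neg (not_le.mpr hbc), if_pos hbd]
          rw [abs_le] at k ⊢
          constructor <;> linarith
        · push_neg at hbd
          have k := key (-1) hm1 1 h1mem (by norm_num)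
          simp only [hf, if_pos hac, if_neg (not_le.mpr hbc), if_neg (not_lt.mpr hbd)]
          rw [abs_le] at k ⊢
          constructor <;> linarith
      · push_neg at hac
        by_cases had : a < lm 1 - lp 1
        · obtain ⟨hga, hΓa⟩ := hinv a ⟨hac, had⟩
          by_cases hbd : b < lm 1 - lp 1
          · obtain ⟨hgb, hΓb⟩ := hinv b ⟨hbc, hbd⟩
            have hgle : Γinv a ≤ Γinv b := by
              by_contra hlt
              push_neg at hlt
              have := hmono hgb hga hlt
              simp only at this
              rw [hΓa, hΓb] at this
              linarith
            have k := key (Γinv a) hga (Γinv b) hgb hgle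
            simp only [hf, if_neg (not_le.mpr hac), if_neg (not_le.mpr hbc),
              if_pos had, if_pos hbd]
            rw [hΓa, hΓb] at k
            exact k
          · push_neg at hbd
            have k := key (Γinv a) hga 1 h1mem hga.2
            simp only [hf, if_neg (not_le.mpr hac), if_neg (not_le.mpr hbc),
              if_pos had, if_neg (not_lt.mpr hbd)]
            rw [hΓa] at k
            rw [abs_le] at k ⊢
            constructor <;> linarith
        · push_neg at had
          have hbd : ¬ b < lm 1 - lp 1 := not_lt.mpr (le_trans had hab)
          simp only [hf, if_neg (not_le.mpr hac), if_neg (not_le.mpr hbc),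
            if_neg (not_lt.mpr had), if_neg hbd]
          rw [abs_le]; constructor <;> linarith
  have hlip : LipschitzWith 1 f := by
    apply LipschitzWith.of_dist_le_mul
    intro x y
    rw [Real.dist_eq, Real.dist_eq, NNReal.coe_one, one_mul]
    rcases le_total x y with h | h
    · calc |f x - f y| = |f y - f x| := abs_sub_comm _ _
        _ ≤ y - x := main x y h
        _ ≤ |x - y| := by rw [abs_sub_comm]; exact le_abs_self _
    · calc |f x - f y| ≤ x - y := main y x h
        _ ≤ |x - y| := le_abs_self _
  exact ⟨hmono, hlip.continuous, hlip⟩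
end

section
/- Under the assumptions that ℓ₊ is decreasing, ℓ₋ is increasing, both twice differentiable on (−1,1), and ℓ₋′(x)·ℓ₊″(x) ≥ ℓ₋″(x)·ℓ₊′(x) for all x ∈ (−1,1), the potential well Ψ(m) := ℓ₊(Γ⁻¹(m)) + ℓ₋(Γ⁻¹(m)) is convex on (Γ(−1), Γ(1)), where Γ(g) = ℓ₋(g) − ℓ₊(g). -/
/-- Under `ℓ₊′ < 0`, `ℓ₋′ > 0`, and `ℓ₋′ ℓ₊″ ≥ ℓ₋″ ℓ₊′` on `(−1,1)`, the potential well
`Ψ(m) = ℓ₊(Γ⁻¹(m)) + ℓ₋(Γ⁻¹(m))` is convex on `(Γ(−1), Γ(1))`, where `Γ = ℓ₋ − ℓ₊`. -/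
theorem stmt14 (lp lm : ℝ → ℝ) (Γinv : ℝ → ℝ)
    (hlpd : ∀ x ∈ Set.Ioo (-1 : ℝ) 1, DifferentiableAt ℝ lp x)
    (hlmd : ∀ x ∈ Set.Ioo (-1 : ℝ) 1, DifferentiableAt ℝ lm x)
    (hlpd2 : ∀ x ∈ Set.Ioo (-1 : ℝ) 1, DifferentiableAt ℝ (deriv lp) x)
    (hlmd2 : ∀ x ∈ Set.Ioo (-1 : ℝ) 1, DifferentiableAt ℝ (deriv lm) x)
    (hlp' : ∀ x ∈ Set.Ioo (-1 : ℝ) 1, deriv lp x < 0)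
    (hlm' : ∀ x ∈ Set.Ioo (-1 : ℝ) 1, 0 < deriv lm x)
    (hineq : ∀ x ∈ Set.Ioo (-1 : ℝ) 1,
      deriv (deriv lp) x * deriv lm x ≥ deriv (deriv lm) x * deriv lp x)
    (hinv : ∀ m ∈ Set.Ioo (lm (-1) - lp (-1)) (lm 1 - lp 1),
      Γinv m ∈ Set.Ioo (-1 : ℝ) 1 ∧ lm (Γinv m) - lp (Γinv m) = m) :
    ConvexOn ℝ (Set.Ioo (lm (-1) - lp (-1)) (lm 1 - lp 1))
      (fun m => lp (Γinv m) + lm (Γinv m)) := by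
  set I : Set ℝ := Set.Ioo (-1 : ℝ) 1 with hI
  set F : ℝ → ℝ := fun x => lp x + lm x with hF
  set G : ℝ → ℝ := fun x => lm x - lp x with hG
  set h : ℝ → ℝ := fun x => (deriv lp x + deriv lm x) / (deriv lm x - deriv lp x) with hh
  have hIint : interior I = I := interior_Ioo
  have hFd : ∀ x ∈ I, DifferentiableAt ℝ F x := fun x hx => (hlpd x hx).add (hlmd x hx)
  have hGd : ∀ x ∈ I, DifferentiableAt ℝ G x := fun x hx => (hlmd x hx).sub (hlpd x hx)
  have hFder : ∀ x ∈ I, deriv F x = deriv lp x + deriv lm x := fun x hx =>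
    deriv_add (hlpd x hx) (hlmd x hx)
  have hGder : ∀ x ∈ I, deriv G x = deriv lm x - deriv lp x := fun x hx =>
    deriv_sub (hlmd x hx) (hlpd x hx)
  have hGpos : ∀ x ∈ I, 0 < deriv lm x - deriv lp x := fun x hx =>
    sub_pos.2 ((hlp' x hx).trans (hlm' x hx))
  have hGcont : ContinuousOn G I := fun x hx => (hGd x hx).continuousAt.continuousWithinAt
  -- G is strictly monotone on I
  have hGsm : StrictMonoOn G I := by
    apply strictMonoOn_of_deriv_pos (convex_Ioo _ _) hGcont
    intro x hx
    rw [hIint] at hx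
    rw [hGder x hx]
    exact hGpos x hx
  -- h is monotone on I
  have hmono : MonotoneOn h I := by
    have hdiff : ∀ x ∈ I, DifferentiableAt ℝ h x := by
      intro x hx
      exact ((hlpd2 x hx).add (hlmd2 x hx)).div ((hlmd2 x hx).sub (hlpd2 x hx))
        (ne_of_gt (hGpos x hx))
    apply monotoneOn_of_deriv_nonneg (convex_Ioo _ _)
      (fun x hx => (hdiff x hx).continuousAt.continuousWithinAt)
      (by rw [hIint]; exact fun x hx => (hdiff x hx).differentiableWithinAt)
    intro x hx
    rw [hIint] at hx
    have hd : HasDerivAt h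
        (((deriv (deriv lp) x + deriv (deriv lm) x) * (deriv lm x - deriv lp x) -
          (deriv lp x + deriv lm x) * (deriv (deriv lm) x - deriv (deriv lp) x)) /
          (deriv lm x - deriv lp x) ^ 2) x := by
      exact HasDerivAt.div ((hlpd2 x hx).hasDerivAt.add (hlmd2 x hx).hasDerivAt)
        ((hlmd2 x hx).hasDerivAt.sub (hlpd2 x hx).hasDerivAt) (ne_of_gt (hGpos x hx))
    rw [hd.deriv]
    apply div_nonneg _ (sq_nonneg _)
    nlinarith [hineq x hx]
  -- key: slopes of F against G are values of h
  have key : ∀ a ∈ I, ∀ b ∈ I, a < b →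
      ∃ ξ ∈ Set.Ioo a b, (F b - F a) / (G b - G a) = h ξ := by
    intro a ha b hb hab
    have hsub : Set.Icc a b ⊆ I := Set.Icc_subset I ha hb
    have hsub' : Set.Ioo a b ⊆ I := fun x hx => hsub (Set.Ioo_subset_Icc_self hx)
    obtain ⟨ξ, hξ, hc⟩ := exists_ratio_deriv_eq_ratio_slope (f := F) (g := G) hab
      (fun x hx => (hFd x (hsub hx)).continuousAt.continuousWithinAt)
      (fun x hx => (hFd x (hsub' hx)).differentiableWithinAt)
      (fun x hx => (hGd x (hsub hx)).continuousAt.continuousWithinAt)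
      (fun x hx => (hGd x (hsub' hx)).differentiableWithinAt)
    refine ⟨ξ, hξ, ?_⟩
    have hξI : ξ ∈ I := hsub' hξ
    rw [hFder ξ hξI, hGder ξ hξI] at hc
    have hGba : 0 < G b - G a := sub_pos.2 (hGsm ha hb hab)
    rw [hh]
    rw [div_eq_div_iff (ne_of_gt hGba) (ne_of_gt (hGpos ξ hξI))]
    linarith [hc]
  -- conclude convexity via slopes
  apply convexOn_of_slope_mono_adjacent (convex_Ioo _ _)
  intro x y z hx hz hxy hyz
  have hy : y ∈ Set.Ioo (lm (-1) - lp (-1)) (lm 1 - lp 1) := ⟨hx.1.trans hxy, hyz.trans hz.2⟩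
  obtain ⟨ha, hGa⟩ := hinv x hx
  obtain ⟨hb, hGb⟩ := hinv y hy
  obtain ⟨hc, hGc⟩ := hinv z hz
  have hGa' : G (Γinv x) = x := hGa
  have hGb' : G (Γinv y) = y := hGb
  have hGc' : G (Γinv z) = z := hGc
  have hab : Γinv x < Γinv y := by
    rcases lt_or_ge (Γinv x) (Γinv y) with h' | h'
    · exact h'
    · exact absurd (hGsm.le_iff_le hb ha |>.2 h') (by rw [hGa', hGb']; exact not_le.2 hxy)
  have hbc : Γinv y < Γinv z := by
    rcases lt_or_ge (Γinv y) (Γinv z) with h' | h'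
    · exact h'
    · exact absurd (hGsm.le_iff_le hc hb |>.2 h') (by rw [hGb', hGc']; exact not_le.2 hyz)
  obtain ⟨ξ₁, hξ₁, e₁⟩ := key _ ha _ hb hab
  obtain ⟨ξ₂, hξ₂, e₂⟩ := key _ hb _ hc hbc
  have hξ₁I : ξ₁ ∈ I := Set.Icc_subset I ha hb (Set.Ioo_subset_Icc_self hξ₁)
  have hξ₂I : ξ₂ ∈ I := Set.Icc_subset I hb hc (Set.Ioo_subset_Icc_self hξ₂)
  have h12 : ξ₁ ≤ ξ₂ := le_of_lt (hξ₁.2.trans hξ₂.1)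
  have hF₁ : (fun m => lp (Γinv m) + lm (Γinv m)) y - (fun m => lp (Γinv m) + lm (Γinv m)) x
      = F (Γinv y) - F (Γinv x) := rfl
  calc ((fun m => lp (Γinv m) + lm (Γinv m)) y - (fun m => lp (Γinv m) + lm (Γinv m)) x) / (y - x)
      = (F (Γinv y) - F (Γinv x)) / (G (Γinv y) - G (Γinv x)) := by rw [hF₁, hGa', hGb']
    _ = h ξ₁ := e₁
    _ ≤ h ξ₂ := hmono hξ₁I hξ₂I h12
    _ = (F (Γinv z) - F (Γinv y)) / (G (Γinv z) - G (Γinv y)) := e₂.symm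
    _ = ((fun m => lp (Γinv m) + lm (Γinv m)) z - (fun m => lp (Γinv m) + lm (Γinv m)) y) / (z - y) := by
        rw [hGb', hGc']
end

section
/- For the 0-1-loss abstaining game with constraint set Z := {z ∈ [-1,1]ⁿ : (1/n)Fz ≥ b} nonempty, the minimax value with abstain cost c, V_c := min over g ∈ [-1,1]ⁿ and p ∈ [0,1]ⁿ of max over z ∈ Z of (1/n)Σⱼ [pⱼ·(1 − zⱼgⱼ)/2 + (1 − pⱼ)c], satisfies V_c = (1/2)·min over σ ≥ 0 of (−bᵀσ + (1/n)Σⱼ Ψ(xⱼᵀσ, c)) for every c ∈ (0, 1/2], where Ψ(m, c) = |m| + 2c(1 − |m|) for |m| ≤ 1 and |m| otherwise, and xⱼ is the j-th column of F. -/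
open Finset Pointwise

/-- The abstaining potential well for the 0-1 loss. -/
noncomputable def PsiAbst (m c : ℝ) : ℝ :=
  if |m| ≤ 1 then |m| + 2 * c * (1 - |m|) else |m|

namespace Stmt19Aux


lemma mul_sign (x : ℝ) : x * Real.sign x = |x| := by
  rcases lt_trichotomy x 0 with h | h | h
  · rw [Real.sign_of_neg h, abs_of_neg h]; ring
  · simp [h]
  · rw [Real.sign_of_pos h, abs_of_pos h]; ring

lemma abs_sign_le (x : ℝ) : |Real.sign x| ≤ 1 := by
  rcases Real.sign_apply_eq x with h | h | h <;> rw [h] <;> norm_num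

lemma psi_abs_le (m c : ℝ) (hc : 0 ≤ c) : |m| ≤ PsiAbst m c := by
  unfold PsiAbst
  split_ifs with h
  · nlinarith
  · exact le_rfl

lemma psi_ineq1 (M pr g c : ℝ) (hp0 : 0 ≤ pr) (hp1 : pr ≤ 1) (hg : |g| ≤ 1)
    (hc0 : 0 ≤ c) (hc2 : c ≤ 1 / 2) :
    PsiAbst M c ≤ |M - pr * g| + pr + 2 * c * (1 - pr) := by
  have hA0 : 0 ≤ |M - pr * g| := abs_nonneg _
  have hA1 : |M| - pr ≤ |M - pr * g| := by
    have h1 : |pr * g| ≤ pr := by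
      rw [abs_mul, abs_of_nonneg hp0]
      nlinarith [abs_nonneg g]
    have h2 := abs_sub_abs_le_abs_sub M (pr * g)
    linarith
  unfold PsiAbst
  split_ifs with h
  · rcases le_total pr |M| with hp | hp
    · nlinarith [mul_nonneg hc0 (sub_nonneg.2 hp)]
    · nlinarith [mul_nonneg (sub_nonneg.2 hp) (by linarith : (0:ℝ) ≤ 1 - 2 * c)]
  · push_neg at h
    nlinarith

lemma sign_mul_abs (x : ℝ) : Real.sign x * |x| = x := by
  rcases lt_trichotomy x 0 with h | h | h
  · rw [Real.sign_of_neg h, abs_of_neg h]; ring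
  · simp [h]
  · rw [Real.sign_of_pos h, abs_of_pos h]; ring

lemma psi_ineq2 (M z c : ℝ) (hz : |z| ≤ 1) (hc0 : 0 ≤ c) :
    min |M| 1 * ((1 - z * Real.sign M) / 2) + (1 - min |M| 1) * c
      ≤ (PsiAbst M c - z * M) / 2 := by
  have key : z * Real.sign M * |M| = z * M := by
    rw [mul_assoc, sign_mul_abs]
  unfold PsiAbst
  rcases le_or_gt |M| 1 with h | h
  · rw [if_pos h, min_eq_left h]
    have : z * M = z * Real.sign M * |M| := key.symm
    rw [this]; ring_nf; exact le_rfl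
  · rw [if_neg (not_le.2 h), min_eq_right h.le]
    have hs : |z * Real.sign M| ≤ 1 := by
      rw [abs_mul]
      exact mul_le_one₀ hz (abs_nonneg _) (abs_sign_le M)
    rw [← key]
    have h1 : z * Real.sign M ≤ 1 := (abs_le.1 hs).2
    nlinarith

lemma swap_sum {p n : ℕ} (F : Matrix (Fin p) (Fin n) ℝ) (σ : Fin p → ℝ) (z : Fin n → ℝ) :
    ∑ j, z j * ∑ i, F i j * σ i = ∑ i, σ i * ∑ j, F i j * z j := by
  simp_rw [Finset.mul_sum]
  rw [Finset.sum_comm]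
  exact Finset.sum_congr rfl fun i _ => Finset.sum_congr rfl fun j _ => by ring


lemma strong_dual (p n : ℕ) (hn : 0 < n) (F : Matrix (Fin p) (Fin n) ℝ)
    (b : Fin p → ℝ)
    (hne : ∃ z : Fin n → ℝ, (∀ j, |z j| ≤ 1) ∧
      ∀ i, b i ≤ (1 / (n : ℝ)) * ∑ j, F i j * z j)
    (a : Fin n → ℝ) (ε : ℝ) (hε : 0 < ε) :
    ∃ σ : Fin p → ℝ, (∀ i, 0 ≤ σ i) ∧
      -(∑ i, b i * σ i) + (1 / (n : ℝ)) * ∑ j, |a j + ∑ i, F i j * σ i| ≤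
        sSup {u : ℝ | ∃ z : Fin n → ℝ, (∀ j, |z j| ≤ 1) ∧
          (∀ i, b i ≤ (1 / (n : ℝ)) * ∑ j, F i j * z j) ∧
          u = (1 / (n : ℝ)) * ∑ j, a j * z j} + ε := by
  obtain ⟨z₀, hz₀c, hz₀f⟩ := hne
  set W : Set ℝ := {u : ℝ | ∃ z : Fin n → ℝ, (∀ j, |z j| ≤ 1) ∧
      (∀ i, b i ≤ (1 / (n : ℝ)) * ∑ j, F i j * z j) ∧
      u = (1 / (n : ℝ)) * ∑ j, a j * z j} with hW
  have hinv : (0:ℝ) ≤ 1 / (n:ℝ) := by positivity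
  have hWb : BddAbove W := by
    refine ⟨(1 / (n:ℝ)) * ∑ j, |a j|, ?_⟩
    rintro u ⟨z, hzc, -, rfl⟩
    apply mul_le_mul_of_nonneg_left _ hinv
    apply Finset.sum_le_sum; intro j _
    calc a j * z j ≤ |a j * z j| := le_abs_self _
      _ = |a j| * |z j| := abs_mul _ _
      _ ≤ |a j| * 1 := mul_le_mul_of_nonneg_left (hzc j) (abs_nonneg _)
      _ = |a j| := mul_one _
  have hPz : ∀ z : Fin n → ℝ, (∀ j, |z j| ≤ 1) →
      (∀ i, b i ≤ (1/(n:ℝ)) * ∑ j, F i j * z j) →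
      (1/(n:ℝ)) * ∑ j, a j * z j ≤ sSup W := fun z h1 h2 => le_csSup hWb ⟨z, h1, h2, rfl⟩
  set φ : (Fin n → ℝ) → (Fin p → ℝ) × ℝ :=
    fun z => (fun i => (1/(n:ℝ)) * ∑ j, F i j * z j - b i, (1/(n:ℝ)) * ∑ j, a j * z j) with hφ
  have hφc : Continuous φ := by
    apply Continuous.prodMk
    · apply continuous_pi; intro i
      exact (continuous_const.mul (continuous_finset_sum _ fun j _ =>
        (continuous_const.mul (continuous_apply j)))).sub continuous_const
    · exact continuous_const.mul (continuous_finset_sum _ fun j _ =>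
        (continuous_const.mul (continuous_apply j)))
  set Cube : Set (Fin n → ℝ) := Set.Icc (fun _ => (-1:ℝ)) (fun _ => (1:ℝ)) with hCube
  have hCubeMem : ∀ z : Fin n → ℝ, z ∈ Cube ↔ ∀ j, |z j| ≤ 1 := by
    intro z
    simp only [hCube, Set.mem_Icc, Pi.le_def, abs_le, forall_and]
  have hK : IsCompact (φ '' Cube) := (isCompact_Icc).image hφc
  set N : Set ((Fin p → ℝ) × ℝ) := {w | (∀ i, w.1 i ≤ 0) ∧ w.2 ≤ 0} with hN
  have hNc : IsClosed N := by
    have h1 : IsClosed {w : (Fin p → ℝ) × ℝ | ∀ i, w.1 i ≤ 0} := by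
      have he : {w : (Fin p → ℝ) × ℝ | ∀ i, w.1 i ≤ 0} = ⋂ i, {w | w.1 i ≤ 0} := by
        ext w; simp
      rw [he]
      exact isClosed_iInter fun i =>
        isClosed_le ((continuous_apply i).comp continuous_fst) continuous_const
    exact h1.inter (isClosed_le continuous_snd continuous_const)
  set C := φ '' Cube + N with hC
  have hsum2 : ∀ (z₁ z₂ : Fin n → ℝ) (t₁ t₂ : ℝ) (cf : Fin n → ℝ),
      ∑ j, cf j * (t₁ * z₁ j + t₂ * z₂ j)
        = t₁ * ∑ j, cf j * z₁ j + t₂ * ∑ j, cf j * z₂ j := by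
    intro z₁ z₂ t₁ t₂ cf
    rw [Finset.mul_sum, Finset.mul_sum, ← Finset.sum_add_distrib]
    exact Finset.sum_congr rfl fun j _ => by ring
  have hCclosed : IsClosed C := hNc.add_left_of_isCompact hK
  have hCconv : Convex ℝ C := by
    rintro w₁ hw₁ w₂ hw₂ t₁ t₂ ht₁ ht₂ hts
    rw [hC, Set.mem_add] at hw₁ hw₂ ⊢
    obtain ⟨k₁, ⟨z₁, hz₁, rfl⟩, m₁, hm₁, rfl⟩ := hw₁
    obtain ⟨k₂, ⟨z₂, hz₂, rfl⟩, m₂, hm₂, rfl⟩ := hw₂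
    have hzc : (t₁ • z₁ + t₂ • z₂) ∈ Cube := by
      rw [hCubeMem]
      intro j
      have h1 := ((hCubeMem z₁).1 hz₁) j
      have h2 := ((hCubeMem z₂).1 hz₂) j
      simp only [Pi.add_apply, Pi.smul_apply, smul_eq_mul]
      calc |t₁ * z₁ j + t₂ * z₂ j| ≤ |t₁ * z₁ j| + |t₂ * z₂ j| := abs_add_le _ _
        _ = t₁ * |z₁ j| + t₂ * |z₂ j| := by
            rw [abs_mul, abs_mul, abs_of_nonneg ht₁, abs_of_nonneg ht₂]
        _ ≤ t₁ * 1 + t₂ * 1 := add_le_add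
            (mul_le_mul_of_nonneg_left h1 ht₁) (mul_le_mul_of_nonneg_left h2 ht₂)
        _ = 1 := by rw [mul_one, mul_one, hts]
    have hφaff : φ (t₁ • z₁ + t₂ • z₂) = t₁ • φ z₁ + t₂ • φ z₂ := by
      apply Prod.ext
      · funext i
        simp only [hφ, Prod.fst_add, Prod.smul_fst, Pi.add_apply, Pi.smul_apply,
          smul_eq_mul]
        rw [hsum2]
        linear_combination (b i) * hts
      · simp only [hφ, Prod.snd_add, Prod.smul_snd, Pi.add_apply, Pi.smul_apply, smul_eq_mul]
        rw [hsum2]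
        ring
    refine ⟨φ (t₁ • z₁ + t₂ • z₂), ⟨t₁ • z₁ + t₂ • z₂, hzc, rfl⟩,
      t₁ • m₁ + t₂ • m₂, ⟨?_, ?_⟩, ?_⟩
    · intro i
      have h1 := hm₁.1 i
      have h2 := hm₂.1 i
      simp only [Prod.fst_add, Prod.smul_fst, Pi.add_apply, Pi.smul_apply, smul_eq_mul]
      nlinarith
    · have h1 := hm₁.2
      have h2 := hm₂.2
      simp only [Prod.snd_add, Prod.smul_snd, smul_eq_mul]
      nlinarith
    · rw [hφaff, smul_add, smul_add]
      abel
  have hx₀ : ((fun _ => (0:ℝ)) , sSup W + ε) ∉ C := by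
    rw [hC, Set.mem_add]
    rintro ⟨k, ⟨z, hz, rfl⟩, m, hm, heq⟩
    have h1 : ∀ i, b i ≤ (1/(n:ℝ)) * ∑ j, F i j * z j := by
      intro i
      have hfst := congrFun (congrArg Prod.fst heq) i
      have hm1 := hm.1 i
      simp only [hφ, Prod.fst_add, Pi.add_apply] at hfst
      linarith
    have h2 : sSup W + ε ≤ (1/(n:ℝ)) * ∑ j, a j * z j := by
      have hsnd := congrArg Prod.snd heq
      have hm2 := hm.2
      simp only [hφ, Prod.snd_add] at hsnd
      linarith
    have := hPz z ((hCubeMem z).1 hz) h1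
    linarith
  obtain ⟨f, u, hfu, hux⟩ := geometric_hahn_banach_closed_point hCconv hCclosed hx₀
  set σ₀ : Fin p → ℝ := fun i => f (Pi.single i 1, 0) with hσ₀
  set μ : ℝ := f (0, 1) with hμ
  have hexp : ∀ w : (Fin p → ℝ) × ℝ, f w = (∑ i, w.1 i * σ₀ i) + w.2 * μ := by
    intro w
    have hw : w = (∑ i, (w.1 i) • ((Pi.single i (1:ℝ) : Fin p → ℝ), (0:ℝ)))
        + w.2 • ((0 : Fin p → ℝ), (1:ℝ)) := by
      apply Prod.ext
      · simp only [Prod.fst_add, Prod.fst_sum, Prod.smul_fst, Prod.smul_snd, smul_zero,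
          Pi.add_apply, smul_eq_mul]
        funext k
        simp [Finset.sum_apply, Pi.single_apply, mul_comm]
      · simp [Prod.snd_sum]
    nth_rewrite 1 [hw]
    rw [map_add, map_sum]
    simp only [map_smul, smul_eq_mul]
    rfl
  have hφz₀C : ∀ m ∈ N, φ z₀ + m ∈ C := fun m hm =>
    ⟨φ z₀, ⟨z₀, (hCubeMem z₀).2 hz₀c, rfl⟩, m, hm, rfl⟩
  have hfz₀ : f (φ z₀) < u := by
    have h0 : (0 : (Fin p → ℝ) × ℝ) ∈ N := ⟨fun i => le_rfl, le_rfl⟩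
    have := hfu _ (hφz₀C 0 h0)
    rwa [add_zero] at this
  have hfdir : ∀ m ∈ N, f (φ z₀) + f m < u := by
    intro m hm
    have := hfu _ (hφz₀C m hm)
    rwa [map_add] at this
  have hσ₀nn : ∀ i, 0 ≤ σ₀ i := by
    intro i
    by_contra hneg
    push_neg at hneg
    set s : ℝ := (u - f (φ z₀)) / (-(σ₀ i)) with hs
    have hspos : 0 < s := div_pos (by linarith) (by linarith)
    have hmN : ((-(s • (Pi.single i (1:ℝ) : Fin p → ℝ))), (0:ℝ)) ∈ N := by
      refine ⟨fun k => ?_, le_rfl⟩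
      simp only [Pi.neg_apply, Pi.smul_apply, smul_eq_mul, neg_nonpos]
      rcases eq_or_ne i k with rfl | hik
      · simp; positivity
      · simp [Pi.single_apply, hik.symm]
    have hlt := hfdir _ hmN
    have hfm : f ((-(s • (Pi.single i (1:ℝ) : Fin p → ℝ))), (0:ℝ)) = -(s * σ₀ i) := by
      have : ((-(s • (Pi.single i (1:ℝ) : Fin p → ℝ))), (0:ℝ))
          = (-s) • ((Pi.single i (1:ℝ) : Fin p → ℝ), (0:ℝ)) := by
        apply Prod.ext
        · simp [neg_smul]
        · simp
      rw [this, map_smul]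
      simp only [smul_eq_mul]
      show (-s) * σ₀ i = -(s * σ₀ i)
      ring
    rw [hfm] at hlt
    have hcancel : s * (-(σ₀ i)) = u - f (φ z₀) := by
      rw [hs, div_mul_cancel₀]
      linarith
    nlinarith
  have hμnn : 0 ≤ μ := by
    by_contra hneg
    push_neg at hneg
    set s : ℝ := (u - f (φ z₀)) / (-μ) with hs
    have hspos : 0 < s := div_pos (by linarith) (by linarith)
    have hmN : ((0 : Fin p → ℝ), -s) ∈ N := ⟨fun k => le_rfl, neg_nonpos.mpr hspos.le⟩
    have hlt := hfdir _ hmN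
    have hfm : f ((0 : Fin p → ℝ), -s) = -(s * μ) := by
      have : ((0 : Fin p → ℝ), -s) = (-s) • ((0 : Fin p → ℝ), (1:ℝ)) := by
        apply Prod.ext <;> simp
      rw [this, map_smul]
      simp only [smul_eq_mul]
      show (-s) * μ = -(s * μ)
      ring
    rw [hfm] at hlt
    have hcancel : s * (-μ) = u - f (φ z₀) := by
      rw [hs, div_mul_cancel₀]
      linarith
    nlinarith
  have hfx₀ : f ((fun _ => (0:ℝ)), sSup W + ε) = (sSup W + ε) * μ := by
    rw [hexp]
    simp
  have hμpos : 0 < μ := by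
    rcases hμnn.lt_or_eq with h | h
    · exact h
    · exfalso
      have hz₀exp : f (φ z₀) = ∑ i, ((1/(n:ℝ)) * ∑ j, F i j * z₀ j - b i) * σ₀ i
          + ((1/(n:ℝ)) * ∑ j, a j * z₀ j) * μ := hexp _
      have hnn : 0 ≤ f (φ z₀) := by
        rw [hz₀exp, ← h]
        simp only [mul_zero, add_zero]
        apply Finset.sum_nonneg
        intro i _
        have := hz₀f i
        have := hσ₀nn i
        nlinarith
      have hx0 : f ((fun _ => (0:ℝ)), sSup W + ε) = 0 := by rw [hfx₀, ← h]; ring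
      rw [hx0] at hux
      linarith
  refine ⟨fun i => σ₀ i / μ, fun i => div_nonneg (hσ₀nn i) hμnn, ?_⟩
  set σ : Fin p → ℝ := fun i => σ₀ i / μ with hσdef
  have hσ₀eq : ∀ i, σ₀ i = σ i * μ := fun i => (div_mul_cancel₀ _ (ne_of_gt hμpos)).symm
  set zh : Fin n → ℝ := fun j => Real.sign (a j + ∑ i, F i j * σ i) with hzh
  have hzhc : ∀ j, |zh j| ≤ 1 := fun j => abs_sign_le _
  have hmem : φ zh ∈ C := by
    rw [hC, Set.mem_add]
    exact ⟨φ zh, ⟨zh, (hCubeMem zh).2 hzhc, rfl⟩, 0, ⟨fun i => le_rfl, le_rfl⟩, add_zero _⟩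
  have hlt : f (φ zh) < (sSup W + ε) * μ := by
    rw [← hfx₀]
    exact lt_trans (hfu _ hmem) hux
  have hbig : f (φ zh) = μ * (-(∑ i, b i * σ i)
      + (1/(n:ℝ)) * ∑ j, |a j + ∑ i, F i j * σ i|) := by
    rw [hexp]
    have h1 : ∀ j, |a j + ∑ i, F i j * σ i| = (a j + ∑ i, F i j * σ i) * zh j :=
      fun j => (mul_sign _).symm
    rw [Finset.sum_congr rfl fun j _ => h1 j]
    have hsplit : ∑ j, (a j + ∑ i, F i j * σ i) * zh j
        = (∑ j, a j * zh j) + ∑ j, zh j * ∑ i, F i j * σ i := by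
      rw [← Finset.sum_add_distrib]
      exact Finset.sum_congr rfl fun j _ => by ring
    rw [hsplit, swap_sum]
    have hlhs : ∑ i, ((φ zh).1 i) * σ₀ i
        = μ * (∑ i, σ i * ((1/(n:ℝ)) * ∑ j, F i j * zh j) - ∑ i, b i * σ i) := by
      have : ∀ i, ((φ zh).1 i) * σ₀ i
          = μ * (σ i * ((1/(n:ℝ)) * ∑ j, F i j * zh j)) - μ * (b i * σ i) := by
        intro i
        simp only [hφ]
        rw [hσ₀eq i]
        ring
      rw [Finset.sum_congr rfl fun i _ => this i, Finset.sum_sub_distrib,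
        ← Finset.mul_sum, ← Finset.mul_sum, ← mul_sub]
    rw [hlhs]
    have hsnd : (φ zh).2 = (1/(n:ℝ)) * ∑ j, a j * zh j := rfl
    rw [hsnd]
    have e1 : (1/(n:ℝ)) * ((∑ j, a j * zh j) + ∑ i, σ i * ∑ j, F i j * zh j)
        = (1/(n:ℝ)) * (∑ j, a j * zh j) + ∑ i, σ i * ((1/(n:ℝ)) * ∑ j, F i j * zh j) := by
      rw [mul_add]
      congr 1
      rw [Finset.mul_sum]
      exact Finset.sum_congr rfl fun i _ => by ring
    rw [mul_add, e1]
    ring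
  rw [hbig] at hlt
  have := (mul_lt_mul_iff_right₀ hμpos).mp (by linarith [hlt] :
    μ * (-(∑ i, b i * σ i) + (1/(n:ℝ)) * ∑ j, |a j + ∑ i, F i j * σ i|)
      < μ * (sSup W + ε))
  linarith

lemma weak_feas {p n : ℕ} (F : Matrix (Fin p) (Fin n) ℝ) (b : Fin p → ℝ)
    (σ : Fin p → ℝ) (hσ : ∀ i, 0 ≤ σ i) (z : Fin n → ℝ)
    (hzf : ∀ i, b i ≤ (1/(n:ℝ)) * ∑ j, F i j * z j) :
    ∑ i, b i * σ i ≤ (1/(n:ℝ)) * ∑ j, z j * ∑ i, F i j * σ i := by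
  have h1 : (1/(n:ℝ)) * ∑ j, z j * ∑ i, F i j * σ i
      = ∑ i, σ i * ((1/(n:ℝ)) * ∑ j, F i j * z j) := by
    rw [swap_sum, Finset.mul_sum]
    exact Finset.sum_congr rfl fun i _ => by ring
  rw [h1]
  apply Finset.sum_le_sum
  intro i _
  calc b i * σ i = σ i * b i := by ring
    _ ≤ σ i * ((1/(n:ℝ)) * ∑ j, F i j * z j) := mul_le_mul_of_nonneg_left (hzf i) (hσ i)


end Stmt19Aux

open Stmt19Aux in
/-- Minimax value of the 0-1-loss abstaining game with abstain cost `c ∈ (0, 1/2]`: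
`V_c = (1/2) min over σ ≥ 0 of (−bᵀσ + (1/n) Σⱼ Ψ(xⱼᵀσ, c))`. -/
theorem stmt19 (p n : ℕ) (hn : 0 < n) (F : Matrix (Fin p) (Fin n) ℝ)
    (hF : ∀ i j, |F i j| ≤ 1) (b : Fin p → ℝ) (hb : ∀ i, 0 < b i ∧ b i ≤ 1)
    (hne : ∃ z : Fin n → ℝ, (∀ j, |z j| ≤ 1) ∧
      ∀ i, b i ≤ (1 / (n : ℝ)) * ∑ j, F i j * z j)
    (c : ℝ) (hc1 : 0 < c) (hc2 : c ≤ 1 / 2) :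
    sInf {v : ℝ | ∃ g pr : Fin n → ℝ, (∀ j, |g j| ≤ 1) ∧ (∀ j, pr j ∈ Set.Icc (0 : ℝ) 1) ∧
        v = sSup {u : ℝ | ∃ z : Fin n → ℝ, (∀ j, |z j| ≤ 1) ∧
            (∀ i, b i ≤ (1 / (n : ℝ)) * ∑ j, F i j * z j) ∧
            u = (1 / (n : ℝ)) *
              ∑ j, (pr j * ((1 - z j * g j) / 2) + (1 - pr j) * c)}} =
    (1 / 2) * sInf {v : ℝ | ∃ σ : Fin p → ℝ, (∀ i, 0 ≤ σ i) ∧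
        v = -(∑ i, b i * σ i) + (1 / (n : ℝ)) * ∑ j, PsiAbst (∑ i, F i j * σ i) c} := by
  classical
  obtain ⟨z₀, hz₀c, hz₀f⟩ := hne
  have hc0 : (0:ℝ) ≤ c := hc1.le
  have hinv : (0:ℝ) ≤ 1/(n:ℝ) := by positivity
  set L := {v : ℝ | ∃ g pr : Fin n → ℝ, (∀ j, |g j| ≤ 1) ∧ (∀ j, pr j ∈ Set.Icc (0:ℝ) 1) ∧
      v = sSup {u : ℝ | ∃ z : Fin n → ℝ, (∀ j, |z j| ≤ 1) ∧
          (∀ i, b i ≤ (1 / (n : ℝ)) * ∑ j, F i j * z j) ∧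
          u = (1 / (n : ℝ)) *
            ∑ j, (pr j * ((1 - z j * g j) / 2) + (1 - pr j) * c)}} with hLdef
  set D := {v : ℝ | ∃ σ : Fin p → ℝ, (∀ i, 0 ≤ σ i) ∧
      v = -(∑ i, b i * σ i) + (1 / (n : ℝ)) * ∑ j, PsiAbst (∑ i, F i j * σ i) c} with hDdef
  -- basic facts about the inner payoff sets
  have hSbdd : ∀ g pr : Fin n → ℝ, (∀ j, |g j| ≤ 1) → (∀ j, pr j ∈ Set.Icc (0:ℝ) 1) →
      BddAbove {u : ℝ | ∃ z : Fin n → ℝ, (∀ j, |z j| ≤ 1) ∧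
        (∀ i, b i ≤ (1 / (n : ℝ)) * ∑ j, F i j * z j) ∧
        u = (1 / (n : ℝ)) * ∑ j, (pr j * ((1 - z j * g j) / 2) + (1 - pr j) * c)} := by
    intro g pr hg hpr
    refine ⟨(1/(n:ℝ)) * ∑ _j : Fin n, (1 + c), ?_⟩
    rintro u ⟨z, hzc, -, rfl⟩
    apply mul_le_mul_of_nonneg_left _ hinv
    apply Finset.sum_le_sum
    intro j _
    have h1 := (hpr j).1
    have h2 := (hpr j).2
    have hzg : |z j * g j| ≤ 1 := by
      rw [abs_mul]; exact mul_le_one₀ (hzc j) (abs_nonneg _) (hg j)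
    have h3 := (abs_le.1 hzg).1
    nlinarith
  have hSnonneg : ∀ g pr : Fin n → ℝ, (∀ j, |g j| ≤ 1) → (∀ j, pr j ∈ Set.Icc (0:ℝ) 1) →
      ∀ z : Fin n → ℝ, (∀ j, |z j| ≤ 1) →
      0 ≤ (1 / (n : ℝ)) * ∑ j, (pr j * ((1 - z j * g j) / 2) + (1 - pr j) * c) := by
    intro g pr hg hpr z hzc
    apply mul_nonneg hinv
    apply Finset.sum_nonneg
    intro j _
    have h1 := (hpr j).1
    have h2 := (hpr j).2
    have hzg : |z j * g j| ≤ 1 := by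
      rw [abs_mul]; exact mul_le_one₀ (hzc j) (abs_nonneg _) (hg j)
    have h3 := (abs_le.1 hzg).2
    nlinarith
  have hLbdd : BddBelow L := by
    refine ⟨0, ?_⟩
    rintro v ⟨g, pr, hg, hpr, rfl⟩
    have hmem : (1 / (n : ℝ)) * ∑ j, (pr j * ((1 - z₀ j * g j) / 2) + (1 - pr j) * c)
        ∈ {u : ℝ | ∃ z : Fin n → ℝ, (∀ j, |z j| ≤ 1) ∧
          (∀ i, b i ≤ (1 / (n : ℝ)) * ∑ j, F i j * z j) ∧
          u = (1 / (n : ℝ)) * ∑ j, (pr j * ((1 - z j * g j) / 2) + (1 - pr j) * c)} :=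
      ⟨z₀, hz₀c, hz₀f, rfl⟩
    exact (hSnonneg g pr hg hpr z₀ hz₀c).trans (le_csSup (hSbdd g pr hg hpr) hmem)
  have hLne : L.Nonempty := by
    refine ⟨_, ⟨fun _ => 0, fun _ => 0, fun j => by norm_num, fun j => by
      simp [Set.mem_Icc], rfl⟩⟩
  have hDne : D.Nonempty := ⟨_, fun _ => 0, fun i => le_rfl, rfl⟩
  have hDlb : ∀ d ∈ D, 0 ≤ d := by
    rintro d ⟨σ, hσ, rfl⟩
    have h1 : ∑ i, b i * σ i ≤ (1/(n:ℝ)) * ∑ j, z₀ j * ∑ i, F i j * σ i :=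
      weak_feas F b σ hσ z₀ hz₀f
    have h2 : ∀ j ∈ Finset.univ, z₀ j * (∑ i, F i j * σ i)
        ≤ PsiAbst (∑ i, F i j * σ i) c := by
      intro j _
      calc z₀ j * (∑ i, F i j * σ i) ≤ |z₀ j * (∑ i, F i j * σ i)| := le_abs_self _
        _ = |z₀ j| * |∑ i, F i j * σ i| := abs_mul _ _
        _ ≤ 1 * |∑ i, F i j * σ i| :=
            mul_le_mul_of_nonneg_right (hz₀c j) (abs_nonneg _)
        _ = |∑ i, F i j * σ i| := one_mul _
        _ ≤ PsiAbst (∑ i, F i j * σ i) c := psi_abs_le _ _ hc0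
    have h3 := mul_le_mul_of_nonneg_left (Finset.sum_le_sum h2) hinv
    linarith
  have hDbdd : BddBelow D := ⟨0, fun d hd => hDlb d hd⟩
  -- Direction 1 : sInf L ≤ (1/2) * d for every dual value d
  have dir1 : ∀ d ∈ D, sInf L ≤ (1/2) * d := by
    rintro d ⟨σ, hσ, rfl⟩
    set prs : Fin n → ℝ := fun j => min |∑ i, F i j * σ i| 1 with hprs
    set gs : Fin n → ℝ := fun j => Real.sign (∑ i, F i j * σ i) with hgs
    have hgs1 : ∀ j, |gs j| ≤ 1 := fun j => abs_sign_le _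
    have hprs1 : ∀ j, prs j ∈ Set.Icc (0:ℝ) 1 := fun j =>
      ⟨le_min (abs_nonneg _) zero_le_one, min_le_right _ _⟩
    have step1 : sInf L ≤ sSup {u : ℝ | ∃ z : Fin n → ℝ, (∀ j, |z j| ≤ 1) ∧
        (∀ i, b i ≤ (1 / (n : ℝ)) * ∑ j, F i j * z j) ∧
        u = (1 / (n : ℝ)) * ∑ j, (prs j * ((1 - z j * gs j) / 2) + (1 - prs j) * c)} :=
      csInf_le hLbdd ⟨gs, prs, hgs1, hprs1, rfl⟩
    refine step1.trans (csSup_le ⟨_, z₀, hz₀c, hz₀f, rfl⟩ ?_)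
    rintro u ⟨z, hzc, hzf, rfl⟩
    have ht : ∀ j ∈ Finset.univ, prs j * ((1 - z j * gs j) / 2) + (1 - prs j) * c
        ≤ (PsiAbst (∑ i, F i j * σ i) c - z j * ∑ i, F i j * σ i) / 2 := fun j _ =>
      psi_ineq2 (∑ i, F i j * σ i) (z j) c (hzc j) hc0
    have h2 := mul_le_mul_of_nonneg_left (Finset.sum_le_sum ht) hinv
    have hsplit : ∑ j, (PsiAbst (∑ i, F i j * σ i) c - z j * ∑ i, F i j * σ i) / 2
        = ((∑ j, PsiAbst (∑ i, F i j * σ i) c) - ∑ j, z j * ∑ i, F i j * σ i) / 2 := by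
      rw [← Finset.sum_div, Finset.sum_sub_distrib]
    rw [hsplit] at h2
    have hwf := weak_feas F b σ hσ z hzf
    have hexp : (1/(n:ℝ)) * (((∑ j, PsiAbst (∑ i, F i j * σ i) c)
        - ∑ j, z j * ∑ i, F i j * σ i) / 2)
        = ((1/(n:ℝ)) * ∑ j, PsiAbst (∑ i, F i j * σ i) c) / 2
          - ((1/(n:ℝ)) * ∑ j, z j * ∑ i, F i j * σ i) / 2 := by ring
    rw [hexp] at h2
    linarith
  have hd1 : sInf L ≤ (1/2) * sInf D := by
    have h2 : ∀ d ∈ D, 2 * sInf L ≤ d := fun d hd => by linarith [dir1 d hd]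
    have h3 := le_csInf hDne h2
    linarith
  -- Direction 2
  have dir2 : ∀ v ∈ L, (1/2) * sInf D ≤ v := by
    rintro v ⟨g, pr, hg, hpr, rfl⟩
    apply le_of_forall_pos_le_add
    intro ε hε
    set a : Fin n → ℝ := fun j => -(pr j * g j)/2 with haa
    have ha : ∀ j, a j = -(pr j * g j)/2 := fun j => rfl
    obtain ⟨σ, hσ, hdual⟩ := strong_dual p n hn F b ⟨z₀, hz₀c, hz₀f⟩ a ε hε
    have hSb := hSbdd g pr hg hpr
    have hWS : sSup {u : ℝ | ∃ z : Fin n → ℝ, (∀ j, |z j| ≤ 1) ∧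
        (∀ i, b i ≤ (1 / (n : ℝ)) * ∑ j, F i j * z j) ∧
        u = (1 / (n : ℝ)) * ∑ j, a j * z j}
        ≤ sSup {u : ℝ | ∃ z : Fin n → ℝ, (∀ j, |z j| ≤ 1) ∧
          (∀ i, b i ≤ (1 / (n : ℝ)) * ∑ j, F i j * z j) ∧
          u = (1 / (n : ℝ)) * ∑ j, (pr j * ((1 - z j * g j) / 2) + (1 - pr j) * c)}
          - (1/(n:ℝ)) * ∑ j, (pr j / 2 + (1 - pr j) * c) := by
      refine csSup_le ⟨_, z₀, hz₀c, hz₀f, rfl⟩ ?_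
      rintro u ⟨z, hzc, hzf, rfl⟩
      have hpay : (1/(n:ℝ)) * ∑ j, (pr j * ((1 - z j * g j)/2) + (1 - pr j)*c)
          = (1/(n:ℝ)) * ∑ j, (pr j / 2 + (1 - pr j) * c)
            + (1/(n:ℝ)) * ∑ j, a j * z j := by
        rw [← mul_add, ← Finset.sum_add_distrib]
        exact congrArg _ (Finset.sum_congr rfl fun j _ => by rw [ha j]; ring)
      have hmem : (1/(n:ℝ)) * ∑ j, (pr j * ((1 - z j * g j)/2) + (1 - pr j)*c) ∈
          {u : ℝ | ∃ z : Fin n → ℝ, (∀ j, |z j| ≤ 1) ∧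
            (∀ i, b i ≤ (1 / (n : ℝ)) * ∑ j, F i j * z j) ∧
            u = (1 / (n : ℝ)) * ∑ j, (pr j * ((1 - z j * g j) / 2) + (1 - pr j) * c)} :=
        ⟨z, hzc, hzf, rfl⟩
      have hmem2 := le_csSup hSb hmem
      linarith [hmem2, hpay]
    set σ2 : Fin p → ℝ := fun i => 2 * σ i with hσ2
    have hmemD : (-(∑ i, b i * σ2 i)
        + (1/(n:ℝ)) * ∑ j, PsiAbst (∑ i, F i j * σ2 i) c) ∈ D :=
      ⟨σ2, fun i => by
        show (0:ℝ) ≤ 2 * σ i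
        linarith [hσ i], rfl⟩
    have hinfle := csInf_le hDbdd hmemD
    have hb2 : ∑ i, b i * σ2 i = 2 * ∑ i, b i * σ i := by
      rw [Finset.mul_sum]
      exact Finset.sum_congr rfl fun i _ => by
        show b i * (2 * σ i) = 2 * (b i * σ i); ring
    have hpsi : ∀ j ∈ Finset.univ, PsiAbst (∑ i, F i j * σ2 i) c
        ≤ 2*(pr j/2 + (1 - pr j)*c) + 2*|a j + ∑ i, F i j * σ i| := by
      intro j _
      have hMj : ∑ i, F i j * σ2 i = 2 * ∑ i, F i j * σ i := by
        rw [Finset.mul_sum]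
        exact Finset.sum_congr rfl fun i _ => by
          show F i j * (2 * σ i) = 2 * (F i j * σ i); ring
      rw [hMj]
      have h1 := psi_ineq1 (2*∑ i, F i j * σ i) (pr j) (g j) c (hpr j).1 (hpr j).2
        (hg j) hc0 hc2
      have h2 : |a j + ∑ i, F i j * σ i| = |2*∑ i, F i j * σ i - pr j * g j|/2 := by
        rw [ha j, show -(pr j * g j)/2 + ∑ i, F i j * σ i
          = (2*∑ i, F i j * σ i - pr j * g j)/2 from by ring, abs_div]
        norm_num
      rw [h2]
      linarith
    have hsum3 : ∑ j, PsiAbst (∑ i, F i j * σ2 i) c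
        ≤ 2*(∑ j, (pr j/2 + (1 - pr j)*c)) + 2*∑ j, |a j + ∑ i, F i j * σ i| := by
      calc ∑ j, PsiAbst (∑ i, F i j * σ2 i) c
          ≤ ∑ j, (2*(pr j/2 + (1 - pr j)*c) + 2*|a j + ∑ i, F i j * σ i|) :=
            Finset.sum_le_sum hpsi
        _ = 2*(∑ j, (pr j/2 + (1 - pr j)*c)) + 2*∑ j, |a j + ∑ i, F i j * σ i| := by
            rw [Finset.sum_add_distrib, ← Finset.mul_sum, ← Finset.mul_sum]
    have h4 := mul_le_mul_of_nonneg_left hsum3 hinv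
    have hexp2 : (1/(n:ℝ)) * (2*(∑ j, (pr j/2 + (1 - pr j)*c))
        + 2*∑ j, |a j + ∑ i, F i j * σ i|)
        = 2*((1/(n:ℝ)) * ∑ j, (pr j/2 + (1 - pr j)*c))
          + 2*((1/(n:ℝ)) * ∑ j, |a j + ∑ i, F i j * σ i|) := by ring
    rw [hexp2] at h4
    linarith
  have hd2 : (1/2) * sInf D ≤ sInf L := le_csInf hLne dir2
  linarith
end
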